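/- arXiv:2302.02152 — 5 statements merged into one kernel-verified Lean document; each statement's English description precedes it below -/
import Mathlib

section
/- A digraph D of order n with γ_OL(D) = n contains no double-forced vertex; in particular no vertex is both domination-forced and location-forced, and no vertex is location-forced by two different (unordered) pairs of vertices. -/
open scoped symmDiff

/-- The open in-neighbourhood of `v` in the digraph `D` (loops allowed). -/
def Nin {V : Type*} (D : V → V → Prop) (v : V) : Set V := {u | D u v}

/-- A digraph is locatable if every vertex has positive in-degree and
open in-neighbourhoods are pairwise distinct. -/
def Locatable {V : Type*} (D : V → V → Prop) : Prop :=
  (∀ v, (Nin D v).Nonempty) ∧ ∀ x y, Nin D x = Nin D y → x = y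

/-- `S` is an open neighbourhood locating-dominating set of `D`. -/
def IsOLD {V : Type*} (D : V → V → Prop) (S : Set V) : Prop :=
  (∀ v, ∃ u ∈ S, D u v) ∧ ∀ x y, x ≠ y → ∃ s ∈ S, s ∈ Nin D x ∆ Nin D y

/-- The OLD number `γ_OL(D)`: minimum size of an OLD set. -/
noncomputable def oldNum {V : Type*} (D : V → V → Prop) : ℕ :=
  sInf {k | ∃ S : Set V, IsOLD D S ∧ S.ncard = k}

/-- `v` is domination-forced: it is the unique in-neighbour of some vertex. -/
def DomForced {V : Type*} (D : V → V → Prop) (v : V) : Prop := ∃ w, Nin D w = {v}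

/-- `v` is location-forced: some pair of distinct vertices has
in-neighbourhood symmetric difference `{v}`. -/
def LocForced {V : Type*} (D : V → V → Prop) (v : V) : Prop :=
  ∃ x y, x ≠ y ∧ Nin D x ∆ Nin D y = {v}

/-- The arc `xy` is a forcing arc. -/
def ForcingArc {V : Type*} (D : V → V → Prop) (x y : V) : Prop :=
  Nin D y = {x} ∨ ∃ z, Nin D y ∆ Nin D z = {x} ∧ x ∈ Nin D y

/-- The underlying simple undirected graph of a digraph. -/
def underlying {V : Type*} (D : V → V → Prop) : SimpleGraph V where
  Adj x y := x ≠ y ∧ (D x y ∨ D y x)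
  symm := ⟨by intro x y h; exact ⟨h.1.symm, h.2.symm⟩⟩
  loopless := ⟨by intro x h; exact h.1 rfl⟩


section KeyLemma

variable {V : Type*} [Fintype V]

/-- Sum-of-coordinates functional on `Option V → ZMod 2`. -/
noncomputable def sigmaFun (V : Type*) [Fintype V] :
    (Option V → ZMod 2) →ₗ[ZMod 2] ZMod 2 where
  toFun y := ∑ o, y o
  map_add' a b := by simp only [Pi.add_apply, Finset.sum_add_distrib]
  map_smul' m a := by
    simp only [Pi.smul_apply, smul_eq_mul, RingHom.id_apply, Finset.mul_sum]

open Classical in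
/-- Evaluation map sending a formal combination of nodes to the sum of
characteristic functions of the corresponding sets. -/
noncomputable def psiFun (g : Option V → Set V) :
    (Option V → ZMod 2) →ₗ[ZMod 2] (V → ZMod 2) where
  toFun y u := ∑ o, y o * (if u ∈ g o then 1 else 0)
  map_add' a b := by
    funext u
    simp only [Pi.add_apply, add_mul, Finset.sum_add_distrib]
  map_smul' m a := by
    funext u
    simp only [Pi.smul_apply, smul_eq_mul, RingHom.id_apply, Finset.mul_sum, mul_assoc]

lemma key_lemma (v : V) (g : Option V → Set V)
    (p q : Option V → Option V)
    (hpq : ∀ e, p e ≠ q e)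
    (hsd : ∀ e : Option V, g (p e) ∆ g (q e) = {(e.getD v : V)})
    (hne1 : ¬(p none = p (some v) ∧ q none = q (some v)))
    (hne2 : ¬(p none = q (some v) ∧ q none = p (some v))) : False := by
  classical
  set w : Option V → Option V → ZMod 2 :=
    fun e o => (if o = p e then 1 else 0) + (if o = q e then 1 else 0) with hw
  have hσw : ∀ e, sigmaFun V (w e) = 0 := by
    intro e
    have h1 : sigmaFun V (w e) = (∑ o, (if o = p e then (1:ZMod 2) else 0)) +
        (∑ o, (if o = q e then (1:ZMod 2) else 0)) := by
      simp only [sigmaFun, LinearMap.coe_mk, AddHom.coe_mk, hw, Finset.sum_add_distrib]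
    rw [h1, Fintype.sum_ite_eq' (p e) (fun _ => (1:ZMod 2)),
      Fintype.sum_ite_eq' (q e) (fun _ => (1:ZMod 2))]
    decide
  have hΨw : ∀ e (u : V), psiFun g (w e) u = if u = e.getD v then 1 else 0 := by
    intro e u
    have hsplit : psiFun g (w e) u =
        (if u ∈ g (p e) then (1:ZMod 2) else 0) +
        (if u ∈ g (q e) then (1:ZMod 2) else 0) := by
      have h1 : psiFun g (w e) u =
          ∑ o, ((if o = p e then (if u ∈ g o then (1:ZMod 2) else 0) else 0)
          + (if o = q e then (if u ∈ g o then (1:ZMod 2) else 0) else 0)) := by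
        simp only [psiFun, LinearMap.coe_mk, AddHom.coe_mk, hw, add_mul, ite_mul,
          one_mul, zero_mul]
      rw [h1, Finset.sum_add_distrib,
        Fintype.sum_ite_eq' (p e) (fun o => if u ∈ g o then (1:ZMod 2) else 0),
        Fintype.sum_ite_eq' (q e) (fun o => if u ∈ g o then (1:ZMod 2) else 0)]
    rw [hsplit]
    have hmem : u ∈ g (p e) ∆ g (q e) ↔ u = e.getD v := by
      rw [hsd e]; simp
    rw [Set.mem_symmDiff] at hmem
    by_cases h1 : u ∈ g (p e) <;> by_cases h2 : u ∈ g (q e)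
    · have hne : ¬ u = e.getD v :=
        fun h => ((hmem.mpr h).elim (fun hc => hc.2 h2) (fun hc => hc.2 h1))
      rw [if_pos h1, if_pos h2, if_neg hne]; decide
    · rw [if_pos h1, if_neg h2, if_pos (hmem.mp (Or.inl ⟨h1, h2⟩)), add_zero]
    · rw [if_neg h1, if_pos h2, if_pos (hmem.mp (Or.inr ⟨h2, h1⟩)), zero_add]
    · have hne : ¬ u = e.getD v :=
        fun h => ((hmem.mpr h).elim (fun hc => h1 hc.1) (fun hc => h2 hc.1))
      rw [if_neg h1, if_neg h2, if_neg hne, add_zero]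
  -- w is not linearly independent
  have hnli : ¬ LinearIndependent (ZMod 2) w := by
    intro hli
    have hcard : Fintype.card (Option V) =
        Module.finrank (ZMod 2) (Option V → ZMod 2) := by
      rw [Module.finrank_pi]
    have hspan := hli.span_eq_top_of_card_eq_finrank hcard
    have hle : Submodule.span (ZMod 2) (Set.range w) ≤ LinearMap.ker (sigmaFun V) := by
      rw [Submodule.span_le]
      rintro _ ⟨e, rfl⟩
      exact hσw e
    rw [hspan] at hle
    have h1 : sigmaFun V (Pi.single (none : Option V) (1 : ZMod 2)) = 0 :=
      hle Submodule.mem_top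
    have h2 : sigmaFun V (Pi.single (none : Option V) (1 : ZMod 2)) = 1 := by
      simp [sigmaFun, Pi.single_apply]
    rw [h2] at h1
    exact one_ne_zero h1
  obtain ⟨c, hc0, e₀, he₀⟩ := Fintype.not_linearIndependent_iff.mp hnli
  -- push the relation through psiFun
  have hsum0 : (∑ e, c e • psiFun g (w e)) = 0 := by
    simp only [← map_smul, ← map_sum, hc0, map_zero]
  have hrel : ∀ u : V, (if u = v then c none else 0) + c (some u) = 0 := by
    intro u
    have h1 := congrFun hsum0 u
    rw [Finset.sum_apply] at h1
    have h2 : ∀ e ∈ Finset.univ, (c e • psiFun g (w e)) u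
        = c e * (if u = (e : Option V).getD v then 1 else 0) := by
      intro e _
      rw [Pi.smul_apply, hΨw e u, smul_eq_mul]
    rw [Finset.sum_congr rfl h2, Fintype.sum_option] at h1
    simp only [Option.getD_none, Option.getD_some, mul_ite, mul_one, mul_zero,
      Fintype.sum_ite_eq, Pi.zero_apply] at h1
    exact h1
  have hzero : ∀ u : V, u ≠ v → c (some u) = 0 := by
    intro u hu
    simpa [hu] using hrel u
  have hvrel : c none + c (some v) = 0 := by simpa using hrel v
  have hboth : c none = 1 ∧ c (some v) = 1 := by
    have he : c none ≠ 0 ∨ c (some v) ≠ 0 := by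
      rcases e₀ with _ | u
      · exact Or.inl he₀
      · by_cases hu : u = v
        · subst hu; exact Or.inr he₀
        · exact absurd (hzero u hu) he₀
    have h2 : ∀ a : ZMod 2, a = 0 ∨ a = 1 := by decide
    have hab : ∀ a b : ZMod 2, a + b = 0 → a ≠ 0 ∨ b ≠ 0 → a = 1 ∧ b = 1 := by decide
    exact hab _ _ hvrel he
  -- deduce w none = w (some v)
  have hweq : w none = w (some v) := by
    have hsplit : (∑ e, c e • w e) = c none • w none + ∑ u : V, c (some u) • w (some u) := by
      rw [Fintype.sum_option]
    rw [hsplit] at hc0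
    have hsum : (∑ u : V, c (some u) • w (some u)) = c (some v) • w (some v) := by
      rw [Finset.sum_eq_single v]
      · intro b _ hb; rw [hzero b hb, zero_smul]
      · intro h; exact absurd (Finset.mem_univ v) h
    rw [hsum, hboth.1, hboth.2, one_smul, one_smul] at hc0
    funext o
    have h1 := congrFun hc0 o
    rw [Pi.add_apply, Pi.zero_apply] at h1
    have hab : ∀ a b : ZMod 2, a + b = 0 → a = b := by decide
    exact hab _ _ h1
  -- extract the unordered pair equality
  have heval : ∀ o : Option V,
      ((if o = p none then (1:ZMod 2) else 0) + (if o = q none then 1 else 0)) =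
      ((if o = p (some v) then (1:ZMod 2) else 0) + (if o = q (some v) then 1 else 0)) :=
    fun o => congrFun hweq o
  have hP : (p none = p (some v) ∧ p none ≠ q (some v)) ∨
      (p none = q (some v) ∧ p none ≠ p (some v)) := by
    have h := heval (p none)
    by_cases hA : p none = p (some v) <;> by_cases hB : p none = q (some v)
    · exact absurd (hA ▸ hB : p (some v) = q (some v)) (hpq (some v))
    · exact Or.inl ⟨hA, hB⟩
    · exact Or.inr ⟨hB, hA⟩
    · rw [if_pos rfl, if_neg (hpq none), if_neg hA, if_neg hB] at h
      exact absurd h (by decide)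
  have hQ : (q none = p (some v) ∧ q none ≠ q (some v)) ∨
      (q none = q (some v) ∧ q none ≠ p (some v)) := by
    have h := heval (q none)
    by_cases hA : q none = p (some v) <;> by_cases hB : q none = q (some v)
    · exact absurd (hA ▸ hB : p (some v) = q (some v)) (hpq (some v))
    · exact Or.inl ⟨hA, hB⟩
    · exact Or.inr ⟨hB, hA⟩
    · rw [if_neg (fun h' => hpq none h'.symm), if_pos rfl, if_neg hA, if_neg hB] at h
      exact absurd h (by decide)
  rcases hP with ⟨hA, hB⟩ | ⟨hA, hB⟩ <;> rcases hQ with ⟨hC, hD⟩ | ⟨hC, hD⟩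
  · exact hpq none (hA.trans hC.symm)
  · exact hne1 ⟨hA, hC⟩
  · exact hne2 ⟨hA, hC⟩
  · exact hpq none (hA.trans hC.symm)

end KeyLemma

theorem stmt_4 {V : Type*} [Fintype V] (D : V → V → Prop) (hloc : Locatable D)
    (hext : oldNum D = Fintype.card V) (v : V) :
    ¬ ((DomForced D v ∧ LocForced D v) ∨
      ∃ x y x' y', x ≠ y ∧ x' ≠ y' ∧
        Nin D x ∆ Nin D y = {v} ∧ Nin D x' ∆ Nin D y' = {v} ∧
        ({x, y} : Set V) ≠ {x', y'}) := by
  classical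
  intro hdouble
  -- Step 1: every vertex is dom-forced or loc-forced
  have hforce : ∀ u : V, DomForced D u ∨ LocForced D u := by
    intro u
    by_contra hu
    push_neg at hu
    obtain ⟨hnd, hnl⟩ := hu
    have hndom : ∀ w, Nin D w ≠ {u} := by
      intro w hw; exact hnd ⟨w, hw⟩
    have hnloc : ∀ x y, x ≠ y → Nin D x ∆ Nin D y ≠ {u} := by
      intro x y hxy h; exact hnl ⟨x, y, hxy, h⟩
    have hold : IsOLD D (Set.univ \ {u}) := by
      constructor
      · intro t
        have hne : Nin D t ≠ {u} := hndom t
        obtain ⟨a, ha⟩ := hloc.1 t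
        by_cases hau : a = u
        · subst hau
          have hb' : ∃ b ∈ Nin D t, b ≠ a := by
            by_contra hb
            push_neg at hb
            exact hne (Set.eq_singleton_iff_unique_mem.mpr ⟨ha, hb⟩)
          obtain ⟨b, hb, hba⟩ := hb'
          exact ⟨b, ⟨Set.mem_univ b, hba⟩, hb⟩
        · exact ⟨a, ⟨Set.mem_univ a, hau⟩, ha⟩
      · intro x y hxy
        have hne : Nin D x ∆ Nin D y ≠ {u} := hnloc x y hxy
        have hnonempty : (Nin D x ∆ Nin D y).Nonempty := by
          rw [Set.symmDiff_nonempty]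
          exact fun h => hxy (hloc.2 x y h)
        obtain ⟨a, ha⟩ := hnonempty
        by_cases hau : a = u
        · subst hau
          have hb' : ∃ b ∈ Nin D x ∆ Nin D y, b ≠ a := by
            by_contra hb
            push_neg at hb
            exact hne (Set.eq_singleton_iff_unique_mem.mpr ⟨ha, hb⟩)
          obtain ⟨b, hb, hba⟩ := hb'
          exact ⟨b, ⟨Set.mem_univ b, hba⟩, hb⟩
        · exact ⟨a, ⟨Set.mem_univ a, hau⟩, ha⟩
    have hcard : (Set.univ \ {u} : Set V).ncard = Fintype.card V - 1 := by
      rw [Set.ncard_diff_singleton_of_mem (Set.mem_univ u), Set.ncard_univ,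
        Nat.card_eq_fintype_card]
    have hle : oldNum D ≤ Fintype.card V - 1 :=
      Nat.sInf_le ⟨Set.univ \ {u}, hold, hcard⟩
    have hpos : 0 < Fintype.card V := Fintype.card_pos_iff.mpr ⟨v⟩
    omega
  -- Step 2: build edges for each direction
  set g : Option V → Set V := fun o => o.elim ∅ (Nin D) with hg
  have hbot : ∀ t : V, g none ∆ g (some t) = Nin D t := by
    intro t
    show (⊥ : Set V) ∆ Nin D t = Nin D t
    rw [bot_symmDiff]
  have hedge : ∀ u : V, ∃ pu qu : Option V, pu ≠ qu ∧ g pu ∆ g qu = {u} := by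
    intro u
    rcases hforce u with ⟨t, ht⟩ | ⟨a, b, hab, hab2⟩
    · exact ⟨none, some t, by simp, (hbot t).trans ht⟩
    · exact ⟨some a, some b, by simpa using hab, hab2⟩
  choose pf qf hpf hsdf using hedge
  -- Step 3: case analysis on double forcing, apply key_lemma
  rcases hdouble with ⟨⟨t, ht⟩, ⟨x, y, hxy, hxyd⟩⟩ |
      ⟨x, y, x', y', hxy, hxy', hd, hd', hpairs⟩
  · -- dom-forced and loc-forced
    refine key_lemma v g
      (fun e => e.elim (some x) (fun u => if u = v then none else pf u))
      (fun e => e.elim (some y) (fun u => if u = v then some t else qf u))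
      ?_ ?_ ?_ ?_
    · rintro (_ | u)
      · simpa using hxy
      · by_cases hu : u = v
        · simp [hu]
        · simpa [hu] using hpf u
    · rintro (_ | u)
      · exact hxyd
      · by_cases hu : u = v
        · subst hu
          simp only [Option.elim, if_pos rfl, Option.getD_some]
          exact (hbot t).trans ht
        · simpa [hu] using hsdf u
    · rintro ⟨h1, -⟩
      simp at h1
    · rintro ⟨-, h2⟩
      simp at h2
  · -- loc-forced by two distinct pairs
    refine key_lemma v g
      (fun e => e.elim (some x') (fun u => if u = v then some x else pf u))
      (fun e => e.elim (some y') (fun u => if u = v then some y else qf u))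
      ?_ ?_ ?_ ?_
    · rintro (_ | u)
      · simpa using hxy'
      · by_cases hu : u = v
        · simpa [hu] using hxy
        · simpa [hu] using hpf u
    · rintro (_ | u)
      · exact hd'
      · by_cases hu : u = v
        · subst hu
          simp only [Option.elim, if_pos rfl, Option.getD_some]
          exact hd
        · simpa [hu] using hsdf u
    · rintro ⟨h1, h2⟩
      simp only [Option.elim, eq_self_iff_true, if_true, Option.some_inj] at h1 h2
      exact hpairs (by rw [h1, h2])
    · rintro ⟨h1, h2⟩
      simp only [Option.elim, eq_self_iff_true, if_true, Option.some_inj] at h1 h2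
      exact hpairs (by rw [h1, h2, Set.pair_comm])
end

section
/- Let D be a digraph of order n and let D' be the spanning subgraph of D consisting exactly of the forcing arcs of D. Then γ_OL(D) = n if and only if D' is a disjoint union of directed cycles spanning all of V(D) (loops count as cycles of length 1). -/
open scoped symmDiff
set_option linter.unusedSectionVars false
set_option linter.unusedVariables false

section Core
variable {V : Type*} [Fintype V] [DecidableEq V]

variable (s : V → Finset V)

/-- Auxiliary graph on the members of `F`, with an edge `s b — s b \ {b}` for each label `b ∈ A`. -/
def lgraph (F : Finset (Finset V)) (hs : ∀ a, a ∈ s a) (A : Finset V) :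
    SimpleGraph {S // S ∈ F} where
  Adj X Y := ∃ b ∈ A, (X.1 = s b ∧ Y.1 = s b \ {b}) ∨ (Y.1 = s b ∧ X.1 = s b \ {b})
  symm := by
    constructor
    rintro X Y ⟨b, hb, h | h⟩
    · exact ⟨b, hb, Or.inr h⟩
    · exact ⟨b, hb, Or.inl h⟩
  loopless := by
    constructor
    rintro X ⟨b, hb, h | h⟩ <;>
    · have h1 := h.1; have h2 := h.2
      rw [h1] at h2
      have := hs b
      rw [h2] at this
      simp at this

variable {s} {F : Finset (Finset V)} {hs : ∀ a, a ∈ s a}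

lemma lgraph_mono {A B : Finset V} (hAB : A ⊆ B) : lgraph s F hs A ≤ lgraph s F hs B := by
  rintro X Y ⟨b, hb, h⟩
  exact ⟨b, hAB hb, h⟩

/-- Along edges whose labels avoid `a`, membership of `a` is invariant. -/
lemma lgraph_invariant {A : Finset V} {a : V} (ha : a ∉ A) {X Y : {S // S ∈ F}}
    (h : (lgraph s F hs A).Reachable X Y) : a ∈ X.1 ↔ a ∈ Y.1 := by
  obtain ⟨w⟩ := h
  induction w with
  | nil => rfl
  | cons hadj w ih =>
    refine Iff.trans ?_ ih
    obtain ⟨b, hb, h | h⟩ := hadj <;>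
    · have hba : b ≠ a := fun hba => ha (hba ▸ hb)
      rw [h.1, h.2]
      simp [Finset.mem_sdiff, Ne.symm hba]
end Core

section Core2
variable {V : Type*} [Fintype V] [DecidableEq V]
variable {s : V → Finset V} {F : Finset (Finset V)} {hs : ∀ a, a ∈ s a}

lemma lgraph_card_cc (hsF : ∀ a, s a ∈ F) (hsd : ∀ a, s a \ {a} ∈ F) (A : Finset V) :
    Nat.card ((lgraph s F hs A).ConnectedComponent) + A.card ≤ F.card := by
  classical
  induction A using Finset.induction_on with
  | empty =>
    simp only [Finset.card_empty, add_zero]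
    calc Nat.card ((lgraph s F hs ∅).ConnectedComponent)
        ≤ Nat.card {S // S ∈ F} :=
          Nat.card_le_card_of_surjective _ (fun c => c.exists_rep)
      _ = F.card := by rw [Nat.card_eq_fintype_card, Fintype.card_coe]
  | @insert a A ha ih =>
    have hlt : Nat.card ((lgraph s F hs (insert a A)).ConnectedComponent)
        < Nat.card ((lgraph s F hs A).ConnectedComponent) := by
      letI := Fintype.ofFinite ((lgraph s F hs A).ConnectedComponent)
      letI := Fintype.ofFinite ((lgraph s F hs (insert a A)).ConnectedComponent)
      rw [Nat.card_eq_fintype_card, Nat.card_eq_fintype_card]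
      set hom := SimpleGraph.Hom.ofLE
        (lgraph_mono (F := F) (hs := hs) (Finset.subset_insert a A)) with hhom
      set φ : (lgraph s F hs A).ConnectedComponent →
          (lgraph s F hs (insert a A)).ConnectedComponent :=
        fun C => C.map hom with hφ
      apply Fintype.card_lt_of_surjective_not_injective φ
      · intro c
        obtain ⟨v, rfl⟩ := c.exists_rep
        exact ⟨SimpleGraph.connectedComponentMk _ v, rfl⟩
      · intro hinj
        have hXa : (s a : Finset V) ∈ F := hsF a
        have hYa : s a \ {a} ∈ F := hsd a
        have hadj : (lgraph s F hs (insert a A)).Adj ⟨s a, hXa⟩ ⟨s a \ {a}, hYa⟩ :=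
          ⟨a, Finset.mem_insert_self a A, Or.inl ⟨rfl, rfl⟩⟩
        have heq : φ (SimpleGraph.connectedComponentMk _ ⟨s a, hXa⟩)
            = φ (SimpleGraph.connectedComponentMk _ ⟨s a \ {a}, hYa⟩) := by
          simp only [hφ, SimpleGraph.ConnectedComponent.map_mk]
          exact SimpleGraph.ConnectedComponent.sound hadj.reachable
        have h2 := hinj heq
        rw [SimpleGraph.ConnectedComponent.eq] at h2
        have hmem := lgraph_invariant (hs := hs) ha h2
        simp [hs a] at hmem
    have hins := Finset.card_insert_of_notMem ha
    rw [hins]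
    omega

lemma lgraph_reachable (hsF : ∀ a, s a ∈ F) (hsd : ∀ a, s a \ {a} ∈ F)
    (hcard : F.card = Fintype.card V + 1) (X Y : {S // S ∈ F}) :
    (lgraph s F hs Finset.univ).Reachable X Y := by
  have h := lgraph_card_cc (hs := hs) hsF hsd (Finset.univ : Finset V)
  rw [hcard, Finset.card_univ] at h
  have h1 : Nat.card ((lgraph s F hs Finset.univ).ConnectedComponent) ≤ 1 := by omega
  haveI : Nonempty ((lgraph s F hs Finset.univ).ConnectedComponent) :=
    ⟨SimpleGraph.connectedComponentMk _ X⟩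
  have hpos : 0 < Nat.card ((lgraph s F hs Finset.univ).ConnectedComponent) := Nat.card_pos
  have h2 : Nat.card ((lgraph s F hs Finset.univ).ConnectedComponent) = 1 :=
    le_antisymm h1 hpos
  haveI := (Nat.card_eq_one_iff_unique.mp h2).1
  rw [← SimpleGraph.ConnectedComponent.eq]
  exact Subsingleton.elim _ _
end Core2

section Core3
variable {V : Type*} [Fintype V] [DecidableEq V]
variable {s : V → Finset V} {F : Finset (Finset V)} {hs : ∀ a, a ∈ s a}

/-- The symmetric difference of the two endpoints of an edge. -/
def edgeDiff (F : Finset (Finset V)) : Sym2 {S // S ∈ F} → Finset V :=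
  Sym2.lift ⟨fun X Y => X.1 ∆ Y.1, fun X Y => symmDiff_comm X.1 Y.1⟩

@[simp] lemma edgeDiff_mk (X Y : {S // S ∈ F}) : edgeDiff F s(X, Y) = X.1 ∆ Y.1 := rfl

lemma sb_symmDiff (hs : ∀ a, a ∈ s a) (b : V) : s b ∆ (s b \ {b}) = {b} := by
  ext x
  simp only [Finset.mem_symmDiff, Finset.mem_sdiff, Finset.mem_singleton]
  by_cases hx : x = b
  · subst hx; simp [hs x]
  · simp [hx]

lemma adj_structure {X Y : {S // S ∈ F}} (h : (lgraph s F hs Finset.univ).Adj X Y) :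
    ∃ b, X.1 ∆ Y.1 = {b} ∧
      ((X.1 = s b ∧ Y.1 = s b \ {b}) ∨ (Y.1 = s b ∧ X.1 = s b \ {b})) := by
  obtain ⟨b, _, hor⟩ := h
  refine ⟨b, ?_, hor⟩
  rcases hor with ⟨h1, h2⟩ | ⟨h1, h2⟩
  · rw [h1, h2]; exact sb_symmDiff hs b
  · rw [h1, h2, symmDiff_comm]; exact sb_symmDiff hs b

lemma edge_diff_singleton {e : Sym2 {S // S ∈ F}}
    (he : e ∈ (lgraph s F hs Finset.univ).edgeSet) : ∃ b, edgeDiff F e = {b} := by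
  induction e using Sym2.ind with | _ X Y =>
  rw [SimpleGraph.mem_edgeSet] at he
  obtain ⟨b, hb, _⟩ := adj_structure (hs := hs) he
  exact ⟨b, hb⟩

lemma edgeDiff_inj {e e' : Sym2 {S // S ∈ F}}
    (he : e ∈ (lgraph s F hs Finset.univ).edgeSet)
    (he' : e' ∈ (lgraph s F hs Finset.univ).edgeSet)
    (hd : edgeDiff F e = edgeDiff F e') : e = e' := by
  induction e using Sym2.ind with | _ X Y =>
  induction e' using Sym2.ind with | _ X' Y' =>
  rw [SimpleGraph.mem_edgeSet] at he he'
  obtain ⟨b, hb, hor⟩ := adj_structure (hs := hs) he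
  obtain ⟨b', hb', hor'⟩ := adj_structure (hs := hs) he'
  simp only [edgeDiff_mk] at hd
  rw [hb, hb'] at hd
  have hbb : b = b' := Finset.singleton_injective hd
  subst hbb
  rcases hor with ⟨h1, h2⟩ | ⟨h1, h2⟩ <;> rcases hor' with ⟨h1', h2'⟩ | ⟨h1', h2'⟩
  · have e1 : X = X' := Subtype.ext (by rw [h1, h1'])
    have e2 : Y = Y' := Subtype.ext (by rw [h2, h2'])
    rw [e1, e2]
  · have e1 : X = Y' := Subtype.ext (by rw [h1, h1'])
    have e2 : Y = X' := Subtype.ext (by rw [h2, h2'])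
    rw [e1, e2, Sym2.eq_swap]
  · have e1 : X = Y' := Subtype.ext (by rw [h2, h2'])
    have e2 : Y = X' := Subtype.ext (by rw [h1, h1'])
    rw [e1, e2, Sym2.eq_swap]
  · have e1 : X = X' := Subtype.ext (by rw [h2, h2'])
    have e2 : Y = Y' := Subtype.ext (by rw [h1, h1'])
    rw [e1, e2]

end Core3

section Core4
variable {V : Type*} [Fintype V] [DecidableEq V]
variable {s : V → Finset V} {F : Finset (Finset V)} {hs : ∀ a, a ∈ s a}

lemma walk_symmDiff {X Y : {S // S ∈ F}} (w : (lgraph s F hs Finset.univ).Walk X Y) :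
    X.1 ∆ Y.1 = (w.edges.map (edgeDiff F)).foldr (· ∆ ·) ∅ := by
  induction w with
  | nil => simp [symmDiff_self, Finset.bot_eq_empty]
  | cons hadj p ih =>
    rw [SimpleGraph.Walk.edges_cons, List.map_cons, List.foldr_cons, ← ih, edgeDiff_mk,
      symmDiff_assoc, symmDiff_symmDiff_cancel_left]

lemma foldr_singletons : ∀ (L : List (Finset V)), (∀ T ∈ L, ∃ b : V, T = {b}) → L.Nodup →
    (L.foldr (· ∆ ·) ∅).card = L.length ∧ (∀ T ∈ L, T ⊆ L.foldr (· ∆ ·) ∅) ∧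
      (∀ x ∈ L.foldr (· ∆ ·) ∅, ({x} : Finset V) ∈ L)
  | [], _, _ => by simp
  | T :: L, h1, h2 => by
    obtain ⟨b, rfl⟩ := h1 _ List.mem_cons_self
    obtain ⟨ih1, ih2, ih3⟩ :=
      foldr_singletons L (fun T hT => h1 T (List.mem_cons_of_mem _ hT)) (List.Nodup.of_cons h2)
    set R := L.foldr (· ∆ ·) ∅ with hR
    have hbR : b ∉ R := fun hbR => (List.nodup_cons.mp h2).1 (ih3 b hbR)
    have hdisj : Disjoint ({b} : Finset V) R := Finset.disjoint_singleton_left.mpr hbR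
    have hsd : ({b} : Finset V) ∆ R = {b} ∪ R := by
      rw [hdisj.symmDiff_eq_sup]; rfl
    refine ⟨?_, ?_, ?_⟩
    · simp only [List.foldr_cons, ← hR, hsd, List.length_cons]
      rw [Finset.card_union_of_disjoint hdisj, Finset.card_singleton]
      omega
    · intro T hT
      rcases List.mem_cons.mp hT with rfl | hT
      · simp only [List.foldr_cons, ← hR, hsd]; exact Finset.subset_union_left
      · simp only [List.foldr_cons, ← hR, hsd]
        exact (ih2 T hT).trans Finset.subset_union_right
    · intro x hx
      simp only [List.foldr_cons, ← hR, hsd, Finset.mem_union, Finset.mem_singleton] at hx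
      rcases hx with rfl | hx
      · exact List.mem_cons_self
      · exact List.mem_cons_of_mem _ (ih3 x hx)

lemma walk_first_down : ∀ {X Y : {S // S ∈ F}} (q : (lgraph s F hs Finset.univ).Walk X Y),
    (∀ T ∈ q.edges.map (edgeDiff F), T ⊆ X.1) → X ≠ Y → ∃ a, a ∈ X.1 ∧ X.1 \ {a} ∈ F := by
  intro X Y q
  cases q with
  | nil => intro _ h; exact absurd rfl h
  | @cons _ Z _ hadj p =>
    intro hsub _
    obtain ⟨b, hb, hor⟩ := adj_structure (hs := hs) hadj
    rcases hor with ⟨h1, h2⟩ | ⟨h1, h2⟩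
    · refine ⟨b, ?_, ?_⟩
      · rw [h1]; exact hs b
      · rw [h1, ← h2]; exact Subtype.mem _
    · exfalso
      have hmem : (edgeDiff F s(X, Z) : Finset V) ⊆ X.1 := by
        apply hsub
        exact List.mem_map_of_mem (by rw [SimpleGraph.Walk.edges_cons]; exact List.mem_cons_self)
      rw [edgeDiff_mk, hb] at hmem
      have : b ∈ X.1 := hmem (Finset.mem_singleton_self b)
      rw [h2] at this
      simp at this

end Core4

section Core5
variable {V : Type*} [Fintype V] [DecidableEq V]
variable {s : V → Finset V} {F : Finset (Finset V)}

lemma path_props (hs : ∀ a, a ∈ s a) {X Y : {S // S ∈ F}} (hXY : X ≠ Y)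
    (hsF : ∀ a, s a ∈ F) (hsd : ∀ a, s a \ {a} ∈ F)
    (hcard : F.card = Fintype.card V + 1) :
    ∃ q : (lgraph s F hs Finset.univ).Walk X Y,
      (X.1 ∆ Y.1).card = q.length ∧
      (∀ T ∈ q.edges.map (edgeDiff F), T ⊆ X.1 ∆ Y.1) := by
  obtain ⟨w⟩ := lgraph_reachable (hs := hs) hsF hsd hcard X Y
  set q := w.toPath.1 with hq
  have hpath : q.IsPath := w.toPath.2
  have hsing : ∀ T ∈ q.edges.map (edgeDiff F), ∃ b : V, T = {b} := by
    intro T hT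
    obtain ⟨e, he, rfl⟩ := List.mem_map.mp hT
    exact edge_diff_singleton (hs := hs) (q.edges_subset_edgeSet he)
  have hnodup : (q.edges.map (edgeDiff F)).Nodup := by
    refine List.Nodup.map_on ?_ hpath.isTrail.edges_nodup
    intro e he e' he' hd
    exact edgeDiff_inj (hs := hs) (q.edges_subset_edgeSet he) (q.edges_subset_edgeSet he') hd
  obtain ⟨hcard', hsub, -⟩ := foldr_singletons _ hsing hnodup
  have hfold := walk_symmDiff (hs := hs) q
  refine ⟨q, ?_, ?_⟩
  · rw [hfold, hcard', List.length_map, SimpleGraph.Walk.length_edges]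
  · intro T hT; rw [hfold]; exact hsub T hT

lemma upper_unique (hs : ∀ a, a ∈ s a) (hsF : ∀ a, s a ∈ F) (hsd : ∀ a, s a \ {a} ∈ F)
    (hcard : F.card = Fintype.card V + 1)
    {a : V} {S : Finset V} (hS : S ∈ F) (haS : a ∈ S) (hSd : S \ {a} ∈ F) : S = s a := by
  have hdiff : S ∆ (S \ {a}) = {a} := by
    ext x
    simp only [Finset.mem_symmDiff, Finset.mem_sdiff, Finset.mem_singleton]
    by_cases hx : x = a
    · subst hx; simp [haS]
    · simp [hx]
  have hXY : (⟨S, hS⟩ : {S // S ∈ F}) ≠ ⟨S \ {a}, hSd⟩ := by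
    intro h
    have h2 : S = S \ {a} := congrArg Subtype.val h
    have h3 := h2 ▸ haS
    simp at h3
  obtain ⟨q, hlen, -⟩ := path_props hs hXY hsF hsd hcard
  have h1 : q.length = 1 := by
    rw [← hlen]
    show (S ∆ (S \ {a})).card = 1
    rw [hdiff, Finset.card_singleton]
  have hadj := SimpleGraph.Walk.adj_of_length_eq_one h1
  obtain ⟨b, hb, hor⟩ := adj_structure (hs := hs) hadj
  have hba : b = a := Finset.singleton_injective (hb.symm.trans hdiff)
  subst hba
  rcases hor with ⟨h1', h2'⟩ | ⟨h1', h2'⟩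
  · exact h1'
  · exfalso
    have hmb := hs b
    rw [← h1'] at hmb
    have : b ∈ S \ {b} := hmb
    simp at this

lemma down_exists (hs : ∀ a, a ∈ s a) (hsF : ∀ a, s a ∈ F) (hsd : ∀ a, s a \ {a} ∈ F)
    (hemp : ∅ ∈ F) (hcard : F.card = Fintype.card V + 1)
    {S : Finset V} (hS : S ∈ F) (hne : S ≠ ∅) : ∃ a, a ∈ S ∧ S \ {a} ∈ F := by
  have hXY : (⟨S, hS⟩ : {S // S ∈ F}) ≠ ⟨∅, hemp⟩ := by
    intro h; exact hne (congrArg Subtype.val h)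
  obtain ⟨q, -, hsub⟩ := path_props hs hXY hsF hsd hcard
  have hsub' : ∀ T ∈ q.edges.map (edgeDiff F), T ⊆ S := by
    intro T hT
    have h2 := hsub T hT
    rwa [show (⟨S, hS⟩ : {S // S ∈ F}).1 ∆ (⟨∅, hemp⟩ : {S // S ∈ F}).1 = S by
      show S ∆ ∅ = S
      rw [← Finset.bot_eq_empty, symmDiff_bot]] at h2
  exact walk_first_down (hs := hs) q hsub' hXY

end Core5

section OLDchar
variable {V : Type*} [Fintype V] {D : V → V → Prop}

lemma isOLD_univ_iff : IsOLD D Set.univ ↔ Locatable D := by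
  constructor
  · rintro ⟨h1, h2⟩
    refine ⟨fun v => ?_, fun x y hxy => ?_⟩
    · obtain ⟨u, -, hu⟩ := h1 v
      exact ⟨u, hu⟩
    · by_contra hne
      obtain ⟨t, -, ht⟩ := h2 x y hne
      rw [hxy, symmDiff_self] at ht
      exact ht
  · rintro ⟨h1, h2⟩
    refine ⟨fun v => ?_, fun x y hxy => ?_⟩
    · obtain ⟨u, hu⟩ := h1 v
      exact ⟨u, trivial, hu⟩
    · have hne : Nin D x ≠ Nin D y := fun h => hxy (h2 x y h)
      have hnonempty : (Nin D x ∆ Nin D y).Nonempty := by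
        rw [Set.nonempty_iff_ne_empty]
        intro h
        exact hne (by rwa [← Set.bot_eq_empty, symmDiff_eq_bot] at h)
      obtain ⟨u, hu⟩ := hnonempty
      exact ⟨u, trivial, hu⟩

lemma forced_mem {S : Set V} (h : IsOLD D S) {v u : V} (hf : ForcingArc D v u) : v ∈ S := by
  rcases hf with hf | ⟨z, hz, hv⟩
  · obtain ⟨t, ht, htD⟩ := h.1 u
    have htm : t ∈ Nin D u := htD
    rw [hf] at htm
    rwa [← htm]
  · have huz : u ≠ z := by
      rintro rfl
      rw [symmDiff_self] at hz
      exact Set.singleton_ne_empty v (by rw [← hz]; rfl)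
    obtain ⟨t, ht, htm⟩ := h.2 u z huz
    rw [hz] at htm
    rwa [← htm]

lemma unforced_old (hU : IsOLD D Set.univ) {v : V} (hnf : ¬ ∃ u, ForcingArc D v u) :
    IsOLD D (Set.univ \ {v}) := by
  constructor
  · intro w
    by_contra hcon
    push_neg at hcon
    apply hnf
    refine ⟨w, Or.inl ?_⟩
    obtain ⟨u, -, hu⟩ := hU.1 w
    have hsub : Nin D w ⊆ {v} := by
      intro x hx
      by_contra hxv
      exact hcon x ⟨trivial, hxv⟩ hx
    have hveq : u = v := hsub hu
    exact Set.eq_singleton_iff_unique_mem.mpr ⟨hveq ▸ hu, fun x hx => hsub hx⟩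
  · intro x y hxy
    by_contra hcon
    push_neg at hcon
    obtain ⟨t, -, htm⟩ := hU.2 x y hxy
    have hsub : Nin D x ∆ Nin D y ⊆ {v} := by
      intro u hu
      by_contra huv
      exact hcon u ⟨trivial, huv⟩ hu
    have heq : Nin D x ∆ Nin D y = {v} :=
      Set.eq_singleton_iff_unique_mem.mpr ⟨hsub htm ▸ htm, fun u hu => hsub hu⟩
    apply hnf
    have hv : v ∈ Nin D x ∆ Nin D y := heq ▸ rfl
    rcases Set.mem_symmDiff.mp hv with ⟨hvx, -⟩ | ⟨hvy, -⟩
    · exact ⟨x, Or.inr ⟨y, heq, hvx⟩⟩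
    · exact ⟨y, Or.inr ⟨x, by rwa [symmDiff_comm], hvy⟩⟩

lemma oldNum_eq_card_iff :
    oldNum D = Fintype.card V ↔ (Locatable D ∧ ∀ v, ∃ u, ForcingArc D v u) := by
  classical
  rw [oldNum]
  constructor
  · intro h
    by_cases hne : {k | ∃ S : Set V, IsOLD D S ∧ S.ncard = k}.Nonempty
    · have hmem := Nat.sInf_mem hne
      obtain ⟨S, hS, hSc⟩ := hmem
      rw [h] at hSc
      have hSuniv : S = Set.univ := by
        apply Set.eq_of_subset_of_ncard_le (Set.subset_univ S)
        rw [hSc, Set.ncard_univ, Nat.card_eq_fintype_card]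
      have hU : IsOLD D Set.univ := hSuniv ▸ hS
      refine ⟨isOLD_univ_iff.mp hU, fun v => ?_⟩
      by_contra hnf
      have hOLD := unforced_old hU hnf
      have hc : (Set.univ \ {v} : Set V).ncard = Fintype.card V - 1 := by
        rw [Set.ncard_diff_singleton_of_mem (Set.mem_univ v), Set.ncard_univ,
          Nat.card_eq_fintype_card]
      have hle : sInf {k | ∃ S : Set V, IsOLD D S ∧ S.ncard = k} ≤ Fintype.card V - 1 :=
        Nat.sInf_le ⟨_, hOLD, hc⟩
      have hpos : 0 < Fintype.card V := Fintype.card_pos_iff.mpr ⟨v⟩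
      omega
    · rw [Set.not_nonempty_iff_eq_empty] at hne
      rw [hne, Nat.sInf_empty] at h
      have hE : IsEmpty V := Fintype.card_eq_zero_iff.mp h.symm
      exact ⟨⟨fun v => hE.elim v, fun x y _ => hE.elim x⟩, fun v => hE.elim v⟩
  · rintro ⟨hloc, hforce⟩
    have hU : IsOLD D Set.univ := isOLD_univ_iff.mpr hloc
    have hset : {k | ∃ S : Set V, IsOLD D S ∧ S.ncard = k} = {Fintype.card V} := by
      ext k
      simp only [Set.mem_setOf_eq, Set.mem_singleton_iff]
      constructor
      · rintro ⟨S, hS, rfl⟩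
        have hSu : S = Set.univ := by
          ext v
          simp only [Set.mem_univ, iff_true]
          exact forced_mem hS (hforce v).choose_spec
        rw [hSu, Set.ncard_univ, Nat.card_eq_fintype_card]
      · rintro rfl
        exact ⟨Set.univ, hU, by rw [Set.ncard_univ, Nat.card_eq_fintype_card]⟩
    rw [hset, csInf_singleton]

lemma rhs_imp (h : ∀ v : V, (∃! u, ForcingArc D v u) ∧ (∃! u, ForcingArc D u v)) :
    Locatable D ∧ ∀ v, ∃ u, ForcingArc D v u := by
  refine ⟨⟨fun v => ?_, fun x y heq => ?_⟩, fun v => ((h v).1).exists⟩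
  · obtain ⟨u, hu, -⟩ := (h v).2
    rcases hu with hu | ⟨z, hz, hm⟩
    · exact ⟨u, by rw [hu]; rfl⟩
    · exact ⟨u, hm⟩
  · by_contra hne
    obtain ⟨u, hu, -⟩ := (h x).2
    have huy : ForcingArc D u y := by
      rcases hu with hu' | ⟨z, hz, hm⟩
      · exact Or.inl (by rw [← heq]; exact hu')
      · have hzy : z ≠ y := by
          rintro rfl
          rw [heq, symmDiff_self] at hz
          exact Set.singleton_ne_empty u (by rw [← hz]; rfl)
        exact Or.inr ⟨z, by rw [← heq]; exact hz, by rw [← heq]; exact hm⟩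
    obtain ⟨w, -, hun⟩ := (h u).1
    exact hne ((hun x hu).trans (hun y huy).symm)

end OLDchar

section Hard
variable {V : Type*} [Fintype V] {D : V → V → Prop}

lemma lhs_imp (hloc : Locatable D) (hforce : ∀ v, ∃ u, ForcingArc D v u) :
    ∀ v : V, (∃! u, ForcingArc D v u) ∧ (∃! u, ForcingArc D u v) := by
  classical
  set Ninf : V → Finset V := fun v => Finset.univ.filter (fun u => D u v) with hNinf
  have hmem : ∀ u v, u ∈ Ninf v ↔ u ∈ Nin D v := by
    intro u v
    simp [hNinf, Nin, Set.mem_setOf_eq]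
  have hinj : Function.Injective Ninf := by
    intro x y hxy
    apply hloc.2
    ext u
    rw [← hmem u x, ← hmem u y, hxy]
  set F : Finset (Finset V) := insert ∅ (Finset.univ.image Ninf) with hF
  have hemp : ∅ ∈ F := Finset.mem_insert_self _ _
  have hmemF : ∀ v, Ninf v ∈ F :=
    fun v => Finset.mem_insert_of_mem (Finset.mem_image_of_mem _ (Finset.mem_univ v))
  have hnotemp : ∀ v, Ninf v ≠ ∅ := by
    intro v h
    obtain ⟨u, hu⟩ := hloc.1 v
    have := (hmem u v).mpr hu
    rw [h] at this
    simp at this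
  have hFcard : F.card = Fintype.card V + 1 := by
    have h2 : ∅ ∉ Finset.univ.image Ninf := by
      intro h
      obtain ⟨v, -, hv⟩ := Finset.mem_image.mp h
      exact hnotemp v hv
    rw [hF, Finset.card_insert_of_notMem h2,
      Finset.card_image_of_injective _ hinj, Finset.card_univ]
  -- translation between forcing arcs and "down-edges" in F
  have htrans : ∀ a w, ForcingArc D a w ↔ (a ∈ Ninf w ∧ Ninf w \ {a} ∈ F) := by
    intro a w
    constructor
    · rintro (h | ⟨z, hz, ha⟩)
      · have haw : a ∈ Ninf w := (hmem a w).mpr (by rw [h]; rfl)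
        refine ⟨haw, ?_⟩
        have : Ninf w \ {a} = ∅ := by
          ext x
          simp only [Finset.mem_sdiff, Finset.mem_singleton, Finset.notMem_empty, iff_false]
          rintro ⟨hx, hxa⟩
          have := (hmem x w).mp hx
          rw [h] at this
          exact hxa this
        rw [this]; exact hemp
      · have haw : a ∈ Ninf w := (hmem a w).mpr ha
        refine ⟨haw, ?_⟩
        have haz : a ∉ Nin D z := by
          intro haz
          have := Set.ext_iff.mp hz a
          simp only [Set.mem_symmDiff, Set.mem_singleton_iff] at this
          tauto
        have hzeq : Ninf w \ {a} = Ninf z := by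
          ext x
          simp only [Finset.mem_sdiff, Finset.mem_singleton, hmem]
          have hx := Set.ext_iff.mp hz x
          simp only [Set.mem_symmDiff, Set.mem_singleton_iff] at hx
          by_cases hxa : x = a
          · subst hxa; tauto
          · tauto
        rw [hzeq]; exact hmemF z
    · rintro ⟨haw, hd⟩
      rcases Finset.mem_insert.mp hd with hd | hd
      · refine Or.inl ?_
        ext x
        simp only [Set.mem_singleton_iff]
        constructor
        · intro hx
          by_contra hxa
          have : x ∈ Ninf w \ {a} := Finset.mem_sdiff.mpr
            ⟨(hmem x w).mpr hx, by simpa using hxa⟩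
          rw [hd] at this
          simp at this
        · rintro rfl
          exact (hmem _ _).mp haw
      · obtain ⟨z, -, hz⟩ := Finset.mem_image.mp hd
        refine Or.inr ⟨z, ?_, (hmem a w).mp haw⟩
        ext x
        simp only [Set.mem_symmDiff, Set.mem_singleton_iff]
        have hx : x ∈ Nin D z ↔ (x ∈ Nin D w ∧ x ≠ a) := by
          rw [← hmem x z, hz, Finset.mem_sdiff, Finset.mem_singleton, hmem x w]
        have haD := (hmem a w).mp haw
        by_cases hxa : x = a
        · subst hxa; tauto
        · tauto
  obtain ⟨u, hu⟩ := Classical.axiomOfChoice hforce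
  set s : V → Finset V := fun a => Ninf (u a) with hsdef
  have hs : ∀ a, a ∈ s a := fun a => ((htrans a (u a)).mp (hu a)).1
  have hsF : ∀ a, s a ∈ F := fun a => hmemF (u a)
  have hsd : ∀ a, s a \ {a} ∈ F := fun a => ((htrans a (u a)).mp (hu a)).2
  have hA : ∀ (a : V) (S : Finset V), S ∈ F → a ∈ S → S \ {a} ∈ F → S = s a :=
    fun a S hS haS hSd => upper_unique hs hsF hsd hFcard hS haS hSd
  have hB : ∀ (S : Finset V), S ∈ F → S ≠ ∅ → ∃ a, a ∈ S ∧ S \ {a} ∈ F :=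
    fun S hS hne => down_exists hs hsF hsd hemp hFcard hS hne
  -- injectivity of s
  have hsinj : ∀ a b, s a = s b → a = b := by
    set t : V → {T // T ∈ F.erase ∅} :=
      fun a => ⟨s a, Finset.mem_erase.mpr ⟨Finset.ne_empty_of_mem (hs a), hsF a⟩⟩ with ht
    have htsurj : Function.Surjective t := by
      rintro ⟨T, hT⟩
      obtain ⟨hTne, hTF⟩ := Finset.mem_erase.mp hT
      obtain ⟨a, haT, hTd⟩ := hB T hTF hTne
      exact ⟨a, Subtype.ext (hA a T hTF haT hTd).symm⟩
    have hcards : Fintype.card V = Fintype.card {T // T ∈ F.erase ∅} := by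
      rw [Fintype.card_coe, Finset.card_erase_of_mem hemp, hFcard]
      simp
    have htinj : Function.Injective t :=
      ((Fintype.bijective_iff_surjective_and_card t).mpr ⟨htsurj, hcards⟩).injective
    intro a b hab
    exact htinj (Subtype.ext hab)
  intro v
  constructor
  · refine ⟨u v, hu v, ?_⟩
    intro w hw
    obtain ⟨h1, h2⟩ := (htrans v w).mp hw
    have := hA v (Ninf w) (hmemF w) h1 h2
    exact hinj (this.trans rfl)
  · have hNv : Ninf v ∈ F := hmemF v
    obtain ⟨a, ha, hd⟩ := hB (Ninf v) hNv (hnotemp v)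
    refine ⟨a, (htrans a v).mpr ⟨ha, hd⟩, ?_⟩
    intro x hx
    obtain ⟨h1, h2⟩ := (htrans x v).mp hx
    have e1 : Ninf v = s x := hA x (Ninf v) hNv h1 h2
    have e2 : Ninf v = s a := hA a (Ninf v) hNv ha hd
    exact hsinj x a (e1.symm.trans e2)

end Hard

/-- The forcing arcs form a spanning disjoint union of directed cycles
(loops allowed) iff every vertex has exactly one outgoing and exactly one
incoming forcing arc. -/
theorem stmt_5 {V : Type*} [Fintype V] (D : V → V → Prop) :
    oldNum D = Fintype.card V ↔
      ∀ v, (∃! u, ForcingArc D v u) ∧ (∃! u, ForcingArc D u v) := by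
  rw [oldNum_eq_card_iff]
  exact ⟨fun ⟨hloc, hforce⟩ => lhs_imp hloc hforce, fun h => rhs_imp h⟩
end

section
/- If a digraph D of order n contains a source (a vertex of out-degree 0, besides possible loop) or a sink, then γ_OL(D) ≤ n − 1 (assuming D is locatable). -/
open scoped symmDiff

theorem stmt_6 {V : Type*} [Fintype V] (D : V → V → Prop) (hloc : Locatable D)
    (h : ∃ v, (∀ u, ¬ D u v) ∨ (∀ u, ¬ D v u)) :
    oldNum D ≤ Fintype.card V - 1 := by
  obtain ⟨v, hv | hv⟩ := h
  · exact absurd (hloc.1 v) (by simpa [Nin, Set.Nonempty] using hv)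
  · apply Nat.sInf_le
    refine ⟨({v}ᶜ : Set V), ⟨?_, ?_⟩, ?_⟩
    · intro w
      obtain ⟨u, hu⟩ := hloc.1 w
      exact ⟨u, fun h' => hv w (h' ▸ hu), hu⟩
    · intro x y hxy
      have hne : Nin D x ≠ Nin D y := fun h' => hxy (hloc.2 x y h')
      have : (Nin D x ∆ Nin D y).Nonempty := by
        rw [Set.nonempty_iff_ne_empty]
        intro h'
        exact hne (symmDiff_eq_bot.mp h')
      obtain ⟨s, hs⟩ := this
      refine ⟨s, ?_, hs⟩
      rcases hs with hs | hs
      · exact fun h' => hv x (h' ▸ hs.1)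
      · exact fun h' => hv y (h' ▸ hs.1)
    · have := Set.ncard_add_ncard_compl ({v} : Set V)
      rw [Set.ncard_singleton, Nat.card_eq_fintype_card] at this
      omega
end

section
/- A connected reflexive locatable digraph D of order n with no directed 2-cycles satisfies γ_OL(D) = n if and only if the digraph obtained from D by removing all loops is the transitive closure of a rooted directed tree. -/
open scoped symmDiff

/-- `T` is a rooted directed tree: loop-free, no 2-cycles, underlying graph a
tree, with a single root having no in-arc and every other vertex exactly one
in-arc (so all arcs are oriented away from the root). -/
def IsRootedDirTree {V : Type*} (T : V → V → Prop) : Prop :=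
  (∀ v, ¬ T v v) ∧ (∀ x y, T x y → ¬ T y x) ∧ (underlying T).IsTree ∧
    ∃ r, (∀ u, ¬ T u r) ∧ ∀ v, v ≠ r → ∃! u, T u v

section Part1
set_option linter.unusedSectionVars false
open Relation
variable {V : Type*} [Fintype V] {D : V → V → Prop}

lemma univ_isOLD (hrefl : ∀ v, D v v) (hloc : Locatable D) : IsOLD D Set.univ := by
  refine ⟨fun v => ⟨v, trivial, hrefl v⟩, fun x y hxy => ?_⟩
  have hne : Nin D x ≠ Nin D y := fun h => hxy (hloc.2 x y h)
  have h2 : Nin D x ∆ Nin D y ≠ ∅ := by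
    rw [← Set.bot_eq_empty]
    exact fun h => hne (symmDiff_eq_bot.mp h)
  obtain ⟨s, hs⟩ := Set.nonempty_iff_ne_empty.mpr h2
  exact ⟨s, trivial, hs⟩

lemma exists_ne_of_ne_singleton {α} {s : Set α} {v : α} (hne : s.Nonempty) (h : s ≠ {v}) :
    ∃ x ∈ s, x ≠ v := by
  by_contra hc
  push_neg at hc
  exact h ((hne.subset_singleton_iff).mp hc)

lemma forced_of_oldNum (hloc : Locatable D) [Nonempty V]
    (h : oldNum D = Fintype.card V) (v : V) : DomForced D v ∨ LocForced D v := by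
  by_contra hv
  push_neg at hv
  obtain ⟨hdom, hlf⟩ := hv
  have hS : IsOLD D ({v}ᶜ) := by
    constructor
    · intro w
      have h1 : Nin D w ≠ {v} := fun h' => hdom ⟨w, h'⟩
      obtain ⟨u, hu, huv⟩ := exists_ne_of_ne_singleton (hloc.1 w) h1
      exact ⟨u, huv, hu⟩
    · intro x y hxy
      have hne : Nin D x ≠ Nin D y := fun h' => hxy (hloc.2 x y h')
      have h2 : (Nin D x ∆ Nin D y).Nonempty := by
        rw [Set.nonempty_iff_ne_empty, ← Set.bot_eq_empty]
        exact fun h' => hne (symmDiff_eq_bot.mp h')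
      have h3 : Nin D x ∆ Nin D y ≠ {v} := fun h' => hlf ⟨x, y, hxy, h'⟩
      obtain ⟨s, hs, hsv⟩ := exists_ne_of_ne_singleton h2 h3
      exact ⟨s, hsv, hs⟩
  have hle : oldNum D ≤ Fintype.card V - 1 := by
    apply Nat.sInf_le
    refine ⟨{v}ᶜ, hS, ?_⟩
    rw [Set.compl_eq_univ_diff, Set.ncard_diff_singleton_of_mem (Set.mem_univ v),
      Set.ncard_univ, Nat.card_eq_fintype_card]
  have := Fintype.card_pos (α := V)
  omega

lemma oldNum_eq_card (hrefl : ∀ v, D v v) (hloc : Locatable D)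
    (hforced : ∀ v, DomForced D v ∨ LocForced D v) : oldNum D = Fintype.card V := by
  have hOLD : ∀ S : Set V, IsOLD D S → S = Set.univ := by
    intro S hS
    ext v
    simp only [Set.mem_univ, iff_true]
    rcases hforced v with ⟨w, hw⟩ | ⟨x, y, hxy, hd⟩
    · obtain ⟨u, huS, hu⟩ := hS.1 w
      have h1 : u ∈ Nin D w := hu
      rw [hw] at h1
      exact h1 ▸ huS
    · obtain ⟨s, hsS, hs⟩ := hS.2 x y hxy
      rw [hd] at hs
      exact hs ▸ hsS
  have hset : {k | ∃ S : Set V, IsOLD D S ∧ S.ncard = k} = {Fintype.card V} := by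
    ext k
    simp only [Set.mem_setOf_eq, Set.mem_singleton_iff]
    constructor
    · rintro ⟨S, hS, rfl⟩
      rw [hOLD S hS, Set.ncard_univ, Nat.card_eq_fintype_card]
    · rintro rfl
      exact ⟨Set.univ, univ_isOLD hrefl hloc, by rw [Set.ncard_univ, Nat.card_eq_fintype_card]⟩
  rw [oldNum, hset, csInf_singleton]

end Part1
section Acyc
set_option linter.unusedSectionVars false
variable {V : Type*} [Fintype V]

lemma tail_support_of_closed {G : SimpleGraph V} {u : V} (c : G.Walk u u) (hne : ¬ c.Nil)
    {x : V} (hx : x ∈ c.support) : x ∈ c.support.tail := by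
  cases c with
  | nil => exact absurd SimpleGraph.Walk.nil_nil hne
  | cons h q =>
    simp only [SimpleGraph.Walk.support_cons, List.tail_cons]
    rcases (List.mem_cons).mp (by simpa using hx) with rfl | hx'
    · exact q.end_mem_support
    · exact hx'

lemma acyclic_parent (T : V → V → Prop) (L : V → ℕ)
    (huniq : ∀ a b c, T a c → T b c → a = b) (hdec : ∀ a b, T a b → L a < L b) :
    (underlying T).IsAcyclic := by
  classical
  intro u c hc
  have hnn : ¬ c.Nil := by
    intro h
    have := hc.three_le_length
    rw [SimpleGraph.Walk.nil_iff_length_eq.mp h] at this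
    omega
  set pa : V → V := fun v => if h : ∃ p, T p v then h.choose else v with hpadef
  have hpa : ∀ a b, T a b → pa b = a := by
    intro a b h
    have he : ∃ p, T p b := ⟨a, h⟩
    simp only [hpadef, dif_pos he]
    exact huniq _ _ _ he.choose_spec h
  have hTpa : ∀ v, pa v ≠ v → T (pa v) v := by
    intro v hv
    by_cases h : ∃ p, T p v
    · simpa only [hpadef, dif_pos h] using h.choose_spec
    · exact absurd (by simp only [hpadef, dif_neg h]) hv
  set ES := c.edges.toFinset with hES
  set SS := c.support.tail.toFinset with hSS
  have hcards : ES.card = c.length := by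
    rw [hES, List.toFinset_card_of_nodup hc.edges_nodup, SimpleGraph.Walk.length_edges]
  have hcardS : SS.card = c.length := by
    rw [hSS, List.toFinset_card_of_nodup hc.support_nodup]
    have := c.length_support
    simp only [List.length_tail, this]
    omega
  have hmemSS : ∀ x, x ∈ c.support → x ∈ SS := by
    intro x hx
    rw [hSS, List.mem_toFinset]
    exact tail_support_of_closed c hnn hx
  have himg : ES ⊆ SS.image (fun v => s(pa v, v)) := by
    intro e he
    rw [hES, List.mem_toFinset] at he
    induction e with
    | h a b =>
      have hadj : (underlying T).Adj a b := c.adj_of_mem_edges he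
      have hma : a ∈ c.support := c.fst_mem_support_of_mem_edges he
      have hmb : b ∈ c.support := c.snd_mem_support_of_mem_edges he
      rcases hadj.2 with h | h
      · exact Finset.mem_image.mpr ⟨b, hmemSS b hmb, by rw [hpa a b h]⟩
      · exact Finset.mem_image.mpr ⟨a, hmemSS a hma, by rw [hpa b a h, Sym2.eq_swap]⟩
  have heq : ES = SS.image (fun v => s(pa v, v)) := by
    apply Finset.eq_of_subset_of_card_le himg
    calc (SS.image (fun v => s(pa v, v))).card ≤ SS.card := Finset.card_image_le
      _ = ES.card := by rw [hcardS, hcards]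
  have hSSne : SS.Nonempty := by
    rw [← Finset.card_pos, hcardS]
    have := hc.three_le_length
    omega
  obtain ⟨v, hvSS, hmin⟩ := SS.exists_min_image L hSSne
  have hψ : s(pa v, v) ∈ ES := by
    rw [heq]
    exact Finset.mem_image_of_mem _ hvSS
  rw [hES, List.mem_toFinset] at hψ
  have hadj : (underlying T).Adj (pa v) v := c.adj_of_mem_edges hψ
  have hT : T (pa v) v := hTpa v hadj.ne
  have hpaSS : pa v ∈ SS := hmemSS _ (c.fst_mem_support_of_mem_edges hψ)
  have := hmin (pa v) hpaSS
  have := hdec _ _ hT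
  omega

end Acyc
section Part2
set_option linter.unusedSectionVars false
open Relation
variable {V : Type*} [Fintype V] {D : V → V → Prop}

/-- The parent relation extracted from the digraph. -/
def Tpar (D : V → V → Prop) (p v : V) : Prop := Nin D p = Nin D v \ {v}

variable (hrefl : ∀ v, D v v) (h2cyc : ∀ x y, x ≠ y → D x y → ¬ D y x) (hloc : Locatable D)

include hrefl h2cyc in
lemma locAux {v y : V} (h : Nin D v ∆ Nin D y = {v}) (hvy : v ≠ y) :
    Nin D y = Nin D v \ {v} := by
  have hvv : v ∈ Nin D v := hrefl v
  have hyy : y ∈ Nin D y := hrefl y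
  have hvNy : v ∉ Nin D y := by
    intro hvN
    have hyNv : y ∉ Nin D v := fun hy => h2cyc v y hvy hvN hy
    have : y ∈ Nin D v ∆ Nin D y := Set.mem_symmDiff.mpr (Or.inr ⟨hyy, hyNv⟩)
    rw [h] at this
    exact hvy this.symm
  ext u
  constructor
  · intro hu
    have huv : u ≠ v := fun he => hvNy (he ▸ hu)
    have huNv : u ∈ Nin D v := by
      by_contra hun
      have : u ∈ Nin D v ∆ Nin D y := Set.mem_symmDiff.mpr (Or.inr ⟨hu, hun⟩)
      rw [h] at this
      exact huv this
    exact ⟨huNv, huv⟩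
  · rintro ⟨huNv, huv⟩
    by_contra hun
    have : u ∈ Nin D v ∆ Nin D y := Set.mem_symmDiff.mpr (Or.inl ⟨huNv, hun⟩)
    rw [h] at this
    exact huv this

include hrefl h2cyc in
lemma struct_of_forced {v : V} (hf : DomForced D v ∨ LocForced D v) :
    Nin D v = {v} ∨ ∃ p, Tpar D p v := by
  rcases hf with ⟨w, hw⟩ | ⟨x, y, hxy, hd⟩
  · have : w ∈ Nin D w := hrefl w
    rw [hw] at this
    exact Or.inl (this ▸ hw)
  · have hvxy : v = x ∨ v = y := by
      by_contra hc
      push_neg at hc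
      have hx : x ∈ Nin D y := by
        by_contra hxn
        have : x ∈ Nin D x ∆ Nin D y := Set.mem_symmDiff.mpr (Or.inl ⟨hrefl x, hxn⟩)
        rw [hd] at this
        exact hc.1 this.symm
      have hy : y ∈ Nin D x := by
        by_contra hyn
        have : y ∈ Nin D x ∆ Nin D y := Set.mem_symmDiff.mpr (Or.inr ⟨hrefl y, hyn⟩)
        rw [hd] at this
        exact hc.2 this.symm
      exact h2cyc x y hxy hx hy
    rcases hvxy with rfl | rfl
    · exact Or.inr ⟨y, locAux hrefl h2cyc hd hxy⟩
    · rw [symmDiff_comm] at hd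
      exact Or.inr ⟨x, locAux hrefl h2cyc hd hxy.symm⟩

include hloc in
lemma tpar_uniq {p q v : V} (hp : Tpar D p v) (hq : Tpar D q v) : p = q :=
  hloc.2 p q (hp.trans hq.symm)

include hrefl in
lemma tpar_mem {p v : V} (hp : Tpar D p v) : p ∈ Nin D v ∧ p ≠ v := by
  have : p ∈ Nin D p := hrefl p
  rw [hp] at this
  exact this

include hrefl in
lemma tpar_lt {p v : V} (hp : Tpar D p v) : (Nin D p).ncard < (Nin D v).ncard := by
  rw [hp]
  exact Set.ncard_diff_singleton_lt_of_mem (hrefl v) (Set.toFinite _)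

include hloc in
lemma no_root_parent {p v : V} (hv : Nin D v = {v}) (hp : Tpar D p v) : False := by
  have : Nin D p = ∅ := by rw [hp, hv]; simp
  exact Set.not_nonempty_empty (this ▸ hloc.1 p)

include hrefl hloc in
lemma transGen_tpar_iff (hstruct : ∀ v, Nin D v = {v} ∨ ∃ p, Tpar D p v) :
    ∀ v x, TransGen (Tpar D) x v ↔ (x ∈ Nin D v ∧ x ≠ v) := by
  have main : ∀ n v, (Nin D v).ncard = n →
      ∀ x, TransGen (Tpar D) x v ↔ (x ∈ Nin D v ∧ x ≠ v) := by
    intro n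
    induction n using Nat.strong_induction_on with
    | _ n IH =>
      intro v hn x
      rcases hstruct v with hroot | ⟨p, hp⟩
      · constructor
        · intro h
          obtain ⟨c, -, hc⟩ := TransGen.tail'_iff.mp h
          exact absurd hc (fun hc => no_root_parent hloc hroot hc)
        · rintro ⟨hx, hxv⟩
          rw [hroot] at hx
          exact absurd hx hxv
      · have hpv := tpar_mem hrefl hp
        have hlt : (Nin D p).ncard < n := hn ▸ tpar_lt hrefl hp
        have IH' := IH _ hlt p rfl
        constructor
        · intro h
          obtain ⟨c, hrc, hc⟩ := TransGen.tail'_iff.mp h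
          have hcp : c = p := tpar_uniq hloc hc hp
          subst hcp
          rcases reflTransGen_iff_eq_or_transGen.mp hrc with h1 | h1
          · exact h1 ▸ hpv
          · obtain ⟨hx1, hx2⟩ := (IH' x).mp h1
            rw [hp] at hx1
            exact ⟨hx1.1, hx1.2⟩
        · rintro ⟨hx, hxv⟩
          have hxp : x ∈ Nin D p := by rw [hp]; exact ⟨hx, hxv⟩
          by_cases hxp' : x = p
          · exact hxp' ▸ TransGen.single hp
          · exact ((IH' x).mpr ⟨hxp, hxp'⟩).tail hp
  intro v x
  exact main _ v rfl x

end Part2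
section Part2c
set_option linter.unusedSectionVars false
open Relation
variable {V : Type*} [Fintype V] {D : V → V → Prop}
variable (hrefl : ∀ v, D v v) (h2cyc : ∀ x y, x ≠ y → D x y → ¬ D y x) (hloc : Locatable D)

lemma reach_transfer {G H : SimpleGraph V} (hadj : ∀ x y, G.Adj x y → H.Reachable x y) :
    ∀ x y, G.Reachable x y → H.Reachable x y := by
  intro x y h
  obtain ⟨w⟩ := h
  induction w with
  | nil => exact SimpleGraph.Reachable.refl _
  | cons h p IH => exact (hadj _ _ h).trans IH

include hrefl in
lemma root_exists [Nonempty V] (hstruct : ∀ v, Nin D v = {v} ∨ ∃ p, Tpar D p v) :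
    ∃ r : V, Nin D r = {r} := by
  obtain ⟨r, -, hmin⟩ := Finset.exists_min_image Finset.univ
    (fun v => (Nin D v).ncard) Finset.univ_nonempty
  refine ⟨r, ?_⟩
  rcases hstruct r with h | ⟨p, hp⟩
  · exact h
  · have := hmin p (Finset.mem_univ p)
    have := tpar_lt hrefl hp
    omega

include hrefl in
lemma reach_of_transGen {x y : V} (h : TransGen (Tpar D) x y) :
    (underlying (Tpar D)).Reachable x y := by
  induction h with
  | single h => exact SimpleGraph.Adj.reachable ⟨(tpar_mem hrefl h).2, Or.inl h⟩
  | tail _ h IH => exact IH.trans (SimpleGraph.Adj.reachable ⟨(tpar_mem hrefl h).2, Or.inl h⟩)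

include hrefl hloc in
lemma root_over_unique (hstruct : ∀ v, Nin D v = {v} ∨ ∃ p, Tpar D p v) :
    ∀ v r1 r2 : V, Nin D r1 = {r1} → Nin D r2 = {r2} →
      ReflTransGen (Tpar D) r1 v → ReflTransGen (Tpar D) r2 v → r1 = r2 := by
  have main : ∀ n (v : V), (Nin D v).ncard = n → ∀ r1 r2, Nin D r1 = {r1} → Nin D r2 = {r2} →
      ReflTransGen (Tpar D) r1 v → ReflTransGen (Tpar D) r2 v → r1 = r2 := by
    intro n
    induction n using Nat.strong_induction_on with
    | _ n IH =>
      intro v hn r1 r2 hr1 hr2 h1 h2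
      rcases hstruct v with hroot | ⟨p, hp⟩
      · have key : ∀ r : V, ReflTransGen (Tpar D) r v → r = v := by
          intro r hrv
          rcases reflTransGen_iff_eq_or_transGen.mp hrv with h | h
          · exact h.symm
          · obtain ⟨c, -, hc⟩ := TransGen.tail'_iff.mp h
            exact absurd hc (fun hc => no_root_parent hloc hroot hc)
        rw [key r1 h1, key r2 h2]
      · have hstep : ∀ r : V, Nin D r = {r} → ReflTransGen (Tpar D) r v →
            ReflTransGen (Tpar D) r p := by
          intro r hr hrv
          rcases reflTransGen_iff_eq_or_transGen.mp hrv with h | h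
          · subst h
            exact absurd hp (fun hp => no_root_parent hloc hr hp)
          · obtain ⟨c, hrc, hc⟩ := TransGen.tail'_iff.mp h
            rwa [tpar_uniq hloc hc hp] at hrc
        exact IH _ (hn ▸ tpar_lt hrefl hp) p rfl r1 r2 hr1 hr2
          (hstep r1 hr1 h1) (hstep r2 hr2 h2)
  intro v
  exact main _ v rfl

include hrefl hloc in
lemma root_over_exists (hstruct : ∀ v, Nin D v = {v} ∨ ∃ p, Tpar D p v) :
    ∀ v : V, ∃ r, Nin D r = {r} ∧ ReflTransGen (Tpar D) r v := by
  have main : ∀ n (v : V), (Nin D v).ncard = n →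
      ∃ r, Nin D r = {r} ∧ ReflTransGen (Tpar D) r v := by
    intro n
    induction n using Nat.strong_induction_on with
    | _ n IH =>
      intro v hn
      rcases hstruct v with hroot | ⟨p, hp⟩
      · exact ⟨v, hroot, ReflTransGen.refl⟩
      · obtain ⟨r, hr, hrp⟩ := IH _ (hn ▸ tpar_lt hrefl hp) p rfl
        exact ⟨r, hr, hrp.tail hp⟩
  intro v
  exact main _ v rfl

include hrefl hloc in
lemma reach_root_invariant (hstruct : ∀ v, Nin D v = {v} ∨ ∃ p, Tpar D p v) :
    ∀ x y : V, (underlying (Tpar D)).Reachable x y → ∀ r, Nin D r = {r} →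
      ReflTransGen (Tpar D) r x → ReflTransGen (Tpar D) r y := by
  intro x y h
  obtain ⟨w⟩ := h
  induction w with
  | nil => exact fun r _ h => h
  | @cons a b c h p IH =>
    intro r hr hra
    rcases h.2 with h' | h'
    · exact IH r hr (hra.tail h')
    · obtain ⟨r', hr', hrb⟩ := root_over_exists hrefl hloc hstruct b
      have hr'a : ReflTransGen (Tpar D) r' a := hrb.tail h'
      have := root_over_unique hrefl hloc hstruct a r r' hr hr' hra hr'a
      subst this
      exact IH r hr hrb
end Part2c
section Part2d
set_option linter.unusedSectionVars false
open Relation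
variable {V : Type*} [Fintype V] {D : V → V → Prop}

lemma tree_of_forced (hconn : (underlying D).Connected) (hrefl : ∀ v, D v v)
    (h2cyc : ∀ x y, x ≠ y → D x y → ¬ D y x) (hloc : Locatable D)
    (hforced : ∀ v, DomForced D v ∨ LocForced D v) :
    ∃ T : V → V → Prop, IsRootedDirTree T ∧
      ∀ x y, (x ≠ y ∧ D x y) ↔ TransGen T x y := by
  have hne : Nonempty V := hconn.nonempty
  have hstruct : ∀ v, Nin D v = {v} ∨ ∃ p, Tpar D p v :=
    fun v => struct_of_forced hrefl h2cyc (hforced v)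
  have hkey := transGen_tpar_iff hrefl hloc hstruct
  obtain ⟨r, hr⟩ := root_exists hrefl hstruct
  have hrootuniq : ∀ r' : V, Nin D r' = {r'} → r' = r := by
    intro r' hr'
    have hreach : (underlying (Tpar D)).Reachable r' r := by
      refine reach_transfer ?_ r' r (hconn.preconnected r' r)
      rintro a b ⟨hab, h | h⟩
      · exact reach_of_transGen hrefl ((hkey b a).mpr ⟨h, hab⟩)
      · exact (reach_of_transGen hrefl ((hkey a b).mpr ⟨h, hab.symm⟩)).symm
    have h1 : ReflTransGen (Tpar D) r' r :=
      reach_root_invariant hrefl hloc hstruct r' r hreach r' hr' ReflTransGen.refl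
    exact root_over_unique hrefl hloc hstruct r r' r hr' hr h1 ReflTransGen.refl
  refine ⟨Tpar D, ⟨?_, ?_, ⟨?_, ?_⟩, r, ?_, ?_⟩, ?_⟩
  · exact fun v hv => (tpar_mem hrefl hv).2 rfl
  · intro x y hxy hyx
    exact h2cyc x y (tpar_mem hrefl hxy).2 (tpar_mem hrefl hxy).1 (tpar_mem hrefl hyx).1
  · rw [SimpleGraph.connected_iff]
    refine ⟨?_, hne⟩
    intro x y
    refine reach_transfer ?_ x y (hconn.preconnected x y)
    rintro a b ⟨hab, h | h⟩
    · exact reach_of_transGen hrefl ((hkey b a).mpr ⟨h, hab⟩)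
    · exact (reach_of_transGen hrefl ((hkey a b).mpr ⟨h, hab.symm⟩)).symm
  · exact acyclic_parent (Tpar D) (fun v => (Nin D v).ncard)
      (fun a b c ha hb => tpar_uniq hloc ha hb) (fun a b h => tpar_lt hrefl h)
  · exact fun u hu => no_root_parent hloc hr hu
  · intro v hvr
    rcases hstruct v with hroot | ⟨p, hp⟩
    · exact absurd (hrootuniq v hroot) hvr
    · exact ⟨p, hp, fun q hq => tpar_uniq hloc hq hp⟩
  · intro x y
    rw [hkey y x]
    exact ⟨fun ⟨h1, h2⟩ => ⟨h2, h1⟩, fun ⟨h1, h2⟩ => ⟨h2, h1⟩⟩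
end Part2d
section Part3
set_option linter.unusedSectionVars false
open Relation
variable {V : Type*} [Fintype V] {D : V → V → Prop}

lemma forced_of_tree (hrefl : ∀ v, D v v) (T : V → V → Prop) (hT : IsRootedDirTree T)
    (hiff : ∀ x y, (x ≠ y ∧ D x y) ↔ TransGen T x y) :
    ∀ v, DomForced D v ∨ LocForced D v := by
  obtain ⟨hirr, hT2, htree, r, hrin, hpar⟩ := hT
  have hNin : ∀ v x, x ∈ Nin D v ↔ (x = v ∨ TransGen T x v) := by
    intro v x
    constructor
    · intro hx
      by_cases h : x = v
      · exact Or.inl h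
      · exact Or.inr ((hiff x v).mp ⟨h, hx⟩)
    · rintro (rfl | h)
      · exact hrefl x
      · exact ((hiff x v).mpr h).2
  have hTG_irr : ∀ x, ¬ TransGen T x x := fun x h => ((hiff x x).mpr h).1 rfl
  intro v
  by_cases hvr : v = r
  · subst hvr
    left
    refine ⟨v, ?_⟩
    ext x
    rw [Set.mem_singleton_iff, hNin v x]
    constructor
    · rintro (rfl | h)
      · rfl
      · obtain ⟨c, -, hc⟩ := TransGen.tail'_iff.mp h
        exact absurd hc (hrin c)
    · rintro rfl
      exact Or.inl rfl
  · right
    obtain ⟨u, hu, huniq⟩ := hpar v hvr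
    have hvu : v ≠ u := fun h => hirr v (by rw [h] at hu ⊢; exact hu)
    have hvNu : v ∉ Nin D u := by
      rw [hNin u v]
      rintro (h | h)
      · exact hvu h
      · exact hTG_irr u (h.head hu)
    have hequiv : ∀ a, a ≠ v → (a ∈ Nin D v ↔ a ∈ Nin D u) := by
      intro a hav
      rw [hNin v a, hNin u a]
      constructor
      · rintro (h | h)
        · exact absurd h hav
        · obtain ⟨c, hrc, hc⟩ := TransGen.tail'_iff.mp h
          rw [huniq c hc] at hrc
          rcases reflTransGen_iff_eq_or_transGen.mp hrc with h' | h'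
          · exact Or.inl h'.symm
          · exact Or.inr h'
      · rintro (rfl | h)
        · exact Or.inr (TransGen.single hu)
        · exact Or.inr (h.tail hu)
    refine ⟨v, u, hvu, ?_⟩
    ext a
    rw [Set.mem_singleton_iff, Set.mem_symmDiff]
    constructor
    · rintro (⟨h1, h2⟩ | ⟨h1, h2⟩)
      · by_contra hav
        exact h2 ((hequiv a hav).mp h1)
      · by_contra hav
        exact h2 ((hequiv a hav).mpr h1)
    · rintro rfl
      exact Or.inl ⟨hrefl _, hvNu⟩
end Part3

theorem stmt_11 {V : Type*} [Fintype V] (D : V → V → Prop)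
    (hconn : (underlying D).Connected) (hrefl : ∀ v, D v v)
    (h2cyc : ∀ x y, x ≠ y → D x y → ¬ D y x) (hloc : Locatable D) :
    oldNum D = Fintype.card V ↔
      ∃ T : V → V → Prop, IsRootedDirTree T ∧
        ∀ x y, (x ≠ y ∧ D x y) ↔ Relation.TransGen T x y := by
  have hne : Nonempty V := hconn.nonempty
  constructor
  · intro h
    exact tree_of_forced hconn hrefl h2cyc hloc (fun v => forced_of_oldNum hloc h v)
  · rintro ⟨T, hT, hiff⟩
    exact oldNum_eq_card hrefl hloc (forced_of_tree hrefl T hT hiff)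
end

section
/- Let D' be a digraph of order n−1 whose underlying graph is a tree with γ_OL(D') = n−1, and let b be a vertex of D' without a loop such that f⁻(b), the unique vertex with a forcing arc into b, is domination-forced in D' and has out-degree 1. Form D by adding a new vertex a with arcs ab and aa. Then γ_OL(D) = n and the underlying graph of D is a tree. -/
open scoped symmDiff

section Aux

open scoped symmDiff

variable {V : Type*}

lemma mem_of_isOLD {D : V → V → Prop} {S : Set V} (hS : IsOLD D S) {v : V}
    (hv : DomForced D v ∨ LocForced D v) : v ∈ S := by
  rcases hv with ⟨w, hw⟩ | ⟨x, y, hxy, hd⟩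
  · obtain ⟨u, huS, hu⟩ := hS.1 w
    have : u ∈ Nin D w := hu
    rw [hw] at this
    rwa [this] at huS
  · obtain ⟨s, hsS, hs⟩ := hS.2 x y hxy
    rw [hd] at hs
    rwa [hs] at hsS

/-- Walks in an `Option` graph avoiding `none` descend. -/
lemma walk_down {G' : SimpleGraph V} {H : SimpleGraph (Option V)}
    (h1 : ∀ u v, H.Adj (some u) (some v) → G'.Adj u v)
    {a a' : Option V} (p : H.Walk a a') (hs : none ∉ p.support) :
    ∀ x y, a = some x → a' = some y →
      ∃ q : G'.Walk x y, q.edges.length = p.edges.length ∧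
        q.edges.map (Sym2.map some) = p.edges ∧ q.support.map some = p.support := by
  induction p with
  | nil =>
    rintro x y rfl hy
    obtain rfl : x = y := by injection hy
    exact ⟨SimpleGraph.Walk.nil, by simp, by simp, by simp⟩
  | @cons u v w h p ih =>
    rintro x y rfl rfl
    have hvs : v ∈ (SimpleGraph.Walk.cons h p).support := by
      simp [SimpleGraph.Walk.support_cons, SimpleGraph.Walk.start_mem_support]
    obtain ⟨v', rfl⟩ : ∃ v', v = some v' := by
      cases v with
      | none => exact absurd hvs hs
      | some v' => exact ⟨v', rfl⟩
    have hs' : none ∉ p.support := fun hn => hs (by simp [SimpleGraph.Walk.support_cons, hn])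
    obtain ⟨q, hql, hqe, hqs⟩ := ih hs' v' y rfl rfl
    refine ⟨SimpleGraph.Walk.cons (h1 _ _ h) q, by simp [hql], ?_, ?_⟩
    · simp [SimpleGraph.Walk.edges_cons, hqe]
    · simp [SimpleGraph.Walk.support_cons, hqs]

lemma acyclic_option {b : V} {G' : SimpleGraph V} (hac : G'.IsAcyclic)
    {H : SimpleGraph (Option V)}
    (h1 : ∀ u v, H.Adj (some u) (some v) → G'.Adj u v)
    (h2 : ∀ x, H.Adj none x → x = some b) : H.IsAcyclic := by
  classical
  intro z p hp
  by_cases hz : (none : Option V) ∈ p.support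
  · -- rotate to a cycle at `none`
    have hrot := hp.rotate hz
    set c := p.rotate none hz with hc
    clear_value c
    clear hp hc hz
    rcases (SimpleGraph.Walk.not_nil_iff).mp hrot.not_nil with ⟨u, h, q, rfl⟩
    obtain rfl : u = some b := h2 u h
    rw [SimpleGraph.Walk.cons_isCycle_iff] at hrot
    obtain ⟨hqp, hqe⟩ := hrot
    -- q : Walk (some b) none; its reverse starts at none, first edge is s(none, some b)
    have hqnil : ¬ q.reverse.Nil := SimpleGraph.Walk.not_nil_of_ne (by simp)
    rcases (SimpleGraph.Walk.not_nil_iff).mp hqnil with ⟨u', h', q', hq'⟩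
    obtain rfl : u' = some b := h2 u' h'
    apply hqe
    have : s(none, some b) ∈ q.reverse.edges := by
      rw [hq']; simp
    rwa [SimpleGraph.Walk.edges_reverse, List.mem_reverse] at this
  · obtain ⟨x, rfl⟩ : ∃ x, z = some x := by
      cases z with
      | none => exact absurd p.start_mem_support hz
      | some x => exact ⟨x, rfl⟩
    obtain ⟨q, hql, hqe, hqs⟩ := walk_down h1 p hz x x rfl rfl
    have hinj : Function.Injective (Sym2.map (some : V → Option V)) :=
      Sym2.map.injective (Option.some_injective V)
    rw [SimpleGraph.Walk.isCycle_def p] at hp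
    refine hac q ((SimpleGraph.Walk.isCycle_def q).mpr ⟨?_, ?_, ?_⟩)
    · have := hp.1.edges_nodup
      rw [← hqe] at this
      exact ⟨this.of_map _⟩
    · intro hq
      subst hq
      have := hp.2.1
      apply this
      have h3 := hp.1
      -- q = nil gives p.edges = []
      have : p.edges = [] := by rw [← hqe]; simp
      cases p with
      | nil => rfl
      | cons h p => simp [SimpleGraph.Walk.edges_cons] at this
    · have := hp.2.2
      have hts : q.support.tail.map some = p.support.tail := by
        rw [← hqs, List.map_tail]
      rw [← hts] at this
      exact this.of_map _

end Aux

theorem stmt_19 {V : Type*} [Fintype V] (D' : V → V → Prop) (b c : V)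
    (htree : (underlying D').IsTree) (hext : oldNum D' = Fintype.card V)
    (hbloop : ¬ D' b b)
    (hc : ForcingArc D' c b) (hcu : ∀ c', ForcingArc D' c' b → c' = c)
    (hcdom : DomForced D' c) (hcout : {u | D' c u}.ncard = 1)
    (D : Option V → Option V → Prop)
    (hD : ∀ x y, D x y ↔
      ((∃ u v, x = some u ∧ y = some v ∧ D' u v) ∨
        (x = none ∧ y = some b) ∨ (x = none ∧ y = none))) :
    oldNum D = Fintype.card (Option V) ∧ (underlying D).IsTree := by
  classical
  have hne : Nonempty V := htree.isConnected.nonempty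
  have hV1 : 0 < Fintype.card V := Fintype.card_pos
  -- the whole vertex set is the unique OLD set of D'
  have hmem : Fintype.card V ∈ {k | ∃ S : Set V, IsOLD D' S ∧ S.ncard = k} := by
    rw [← hext]
    apply Nat.sInf_mem
    by_contra hemp
    rw [Set.not_nonempty_iff_eq_empty] at hemp
    rw [oldNum, hemp, Nat.sInf_empty] at hext
    omega
  obtain ⟨S0, hS0, hS0c⟩ := hmem
  have hS0univ : S0 = Set.univ := by
    apply Set.eq_of_subset_of_ncard_le (Set.subset_univ _)
    rw [Set.ncard_univ, Nat.card_eq_fintype_card, hS0c]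
  rw [hS0univ] at hS0
  have hdom : ∀ v, (Nin D' v).Nonempty := fun v => by
    obtain ⟨u, _, hu⟩ := hS0.1 v; exact ⟨u, hu⟩
  have hloc : ∀ x y : V, x ≠ y → ∃ s, s ∈ Nin D' x ∆ Nin D' y := fun x y h => by
    obtain ⟨s, _, hs⟩ := hS0.2 x y h; exact ⟨s, hs⟩
  have hDcb : D' c b := by
    rcases hc with h | ⟨z, _, h⟩
    · show c ∈ Nin D' b; rw [h]; rfl
    · exact h
  have hout : {u | D' c u} = {b} := by
    obtain ⟨a, ha⟩ := Set.ncard_eq_one.mp hcout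
    have hb : b ∈ {u | D' c u} := hDcb
    rw [ha] at hb
    rw [Set.mem_singleton_iff] at hb
    rw [ha, hb]
  have hNb : Nin D' b = {c} := by
    obtain ⟨w, hw⟩ := hcdom
    have hcw : D' c w := by
      have : c ∈ Nin D' w := by rw [hw]; rfl
      exact this
    have hwb : w = b := by
      have : w ∈ ({b} : Set V) := by rw [← hout]; exact hcw
      exact this
    rw [← hwb]; exact hw
  -- every vertex of D' is forced
  have forced : ∀ v : V, DomForced D' v ∨ LocForced D' v := by
    intro v
    by_contra hv
    push_neg at hv
    obtain ⟨hdf, hlf⟩ := hv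
    have hS : IsOLD D' (Set.univ \ {v}) := by
      constructor
      · intro w
        have hnw := hdom w
        have : ∃ u ∈ Nin D' w, u ≠ v := by
          by_contra h
          push_neg at h
          exact hdf ⟨w, Set.eq_singleton_iff_nonempty_unique_mem.mpr ⟨hnw, h⟩⟩
        obtain ⟨u, hu, huv⟩ := this
        exact ⟨u, ⟨trivial, huv⟩, hu⟩
      · intro x y hxy
        obtain ⟨s, hs⟩ := hloc x y hxy
        have : ∃ s' ∈ Nin D' x ∆ Nin D' y, s' ≠ v := by
          by_contra h
          push_neg at h
          exact hlf ⟨x, y, hxy, Set.eq_singleton_iff_nonempty_unique_mem.mpr ⟨⟨s, hs⟩, h⟩⟩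
        obtain ⟨s', hs', hsv⟩ := this
        exact ⟨s', ⟨trivial, hsv⟩, hs'⟩
    have hle : oldNum D' ≤ (Set.univ \ {v} : Set V).ncard := Nat.sInf_le ⟨_, hS, rfl⟩
    have hcard : (Set.univ \ {v} : Set V).ncard = Fintype.card V - 1 := by
      rw [Set.ncard_diff_singleton_of_mem (Set.mem_univ v), Set.ncard_univ,
        Nat.card_eq_fintype_card]
    rw [hcard, hext] at hle
    omega
  -- membership facts about D
  have hmemsome : ∀ u v : V, D (some u) (some v) ↔ D' u v := by
    intro u v
    rw [hD]
    constructor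
    · rintro (⟨u', v', hu, hv, h⟩ | ⟨h, _⟩ | ⟨h, _⟩)
      · obtain rfl : u = u' := by injection hu
        obtain rfl : v = v' := by injection hv
        exact h
      · simp at h
      · simp at h
    · intro h; exact Or.inl ⟨u, v, rfl, rfl, h⟩
  have hmemnone : ∀ v : V, D none (some v) ↔ v = b := by
    intro v
    rw [hD]
    constructor
    · rintro (⟨u', v', hu, _, _⟩ | ⟨_, hv⟩ | ⟨_, hv⟩)
      · simp at hu
      · injection hv
      · simp at hv
    · rintro rfl; exact Or.inr (Or.inl ⟨rfl, rfl⟩)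
  have hnotnone : ∀ x : Option V, D x none ↔ x = none := by
    intro x
    rw [hD]
    constructor
    · rintro (⟨u', v', _, hv, _⟩ | ⟨_, hv⟩ | ⟨hx, _⟩)
      · simp at hv
      · simp at hv
      · exact hx
    · rintro rfl; exact Or.inr (Or.inr ⟨rfl, rfl⟩)
  have hNnone : Nin D none = {none} := by
    ext u
    show D u none ↔ _
    rw [hnotnone]; rfl
  have hNsb : Nin D (some b) = {some c, none} := by
    ext s
    cases s with
    | none =>
      show D none (some b) ↔ _
      simp [hmemnone]
    | some u =>
      show D (some u) (some b) ↔ _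
      rw [hmemsome]
      constructor
      · intro h
        have : u ∈ Nin D' b := h
        rw [hNb, Set.mem_singleton_iff] at this
        simp [this]
      · intro h
        simp only [Set.mem_insert_iff, Set.mem_singleton_iff] at h
        rcases h with h | h
        · have hu : u = c := by injection h
          have : u ∈ Nin D' b := by rw [hNb, hu]; rfl
          exact this
        · simp at h
  have hbne : (some b : Option V) ≠ none := by simp
  have locb : LocForced D (some c) := by
    refine ⟨some b, none, hbne, ?_⟩
    rw [hNsb, hNnone]
    ext s
    rw [Set.mem_symmDiff]
    simp only [Set.mem_insert_iff, Set.mem_singleton_iff]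
    constructor
    · rintro (⟨h1 | h1, h2⟩ | ⟨h1, h2⟩)
      · exact h1
      · exact absurd h1 h2
      · exact absurd (Or.inr h1) h2
    · rintro rfl
      exact Or.inl ⟨Or.inl rfl, by simp⟩
  -- the key structural fact: no location pair involves b
  have key : ∀ (z w₀ : V), z ≠ b → Nin D' b ∆ Nin D' z ≠ {w₀} := by
    intro z w₀ hzb heq
    rw [hNb] at heq
    have hcz : c ∉ Nin D' z := by
      intro h
      apply hzb
      have : z ∈ ({b} : Set V) := by rw [← hout]; exact h
      exact this
    have hcmem : c ∈ ({c} : Set V) ∆ Nin D' z := Set.mem_symmDiff.mpr (Or.inl ⟨rfl, hcz⟩)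
    rw [heq, Set.mem_singleton_iff] at hcmem
    obtain ⟨s, hs⟩ := hdom z
    have hsmem : s ∈ ({c} : Set V) ∆ Nin D' z := by
      refine Set.mem_symmDiff.mpr (Or.inr ⟨hs, fun h => ?_⟩)
      rw [Set.mem_singleton_iff] at h
      exact hcz (h ▸ hs)
    rw [heq, Set.mem_singleton_iff] at hsmem
    apply hcz
    rw [← hcmem] at hsmem
    exact hsmem ▸ hs
  -- every vertex of D is forced
  have forcedD : ∀ x : Option V, DomForced D x ∨ LocForced D x := by
    rintro (_ | v)
    · exact Or.inl ⟨none, hNnone⟩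
    rcases forced v with ⟨w, hw⟩ | ⟨x, y, hxy, hdxy⟩
    · by_cases hwb : w = b
      · subst hwb
        rw [hNb] at hw
        have hvc : c = v := by
          rw [Set.singleton_eq_singleton_iff] at hw
          exact hw
        exact Or.inr (hvc ▸ locb)
      · left
        refine ⟨some w, ?_⟩
        ext s
        cases s with
        | none =>
          show D none (some w) ↔ _
          rw [hmemnone]
          simp [hwb]
        | some u =>
          show D (some u) (some w) ↔ _
          rw [hmemsome]
          constructor
          · intro h
            have : u ∈ Nin D' w := h
            rw [hw, Set.mem_singleton_iff] at this
            simp [this]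
          · intro h
            rw [Set.mem_singleton_iff] at h
            have hu : u = v := by injection h
            have : u ∈ Nin D' w := by rw [hw, hu]; rfl
            exact this
    · have hxb : x ≠ b := by
        rintro rfl
        exact key y v hxy.symm hdxy
      have hyb : y ≠ b := by
        rintro rfl
        rw [symmDiff_comm] at hdxy
        exact key x v hxy hdxy
      right
      refine ⟨some x, some y, by simpa using hxy, ?_⟩
      ext s
      cases s with
      | none =>
        rw [Set.mem_symmDiff]
        have h1 : (none : Option V) ∉ Nin D (some x) := by
          show ¬ D none (some x)
          rw [hmemnone]; exact hxb ∘ Eq.symm ∘ Eq.symm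
        have h2 : (none : Option V) ∉ Nin D (some y) := by
          show ¬ D none (some y)
          rw [hmemnone]; exact hyb
        simp [h1, h2]
      | some u =>
        have htrans : some u ∈ Nin D (some x) ∆ Nin D (some y) ↔ u ∈ Nin D' x ∆ Nin D' y := by
          rw [Set.mem_symmDiff, Set.mem_symmDiff]
          constructor
          · rintro (⟨h1, h2⟩ | ⟨h1, h2⟩)
            · exact Or.inl ⟨(hmemsome u x).mp h1, fun h => h2 ((hmemsome u y).mpr h)⟩
            · exact Or.inr ⟨(hmemsome u y).mp h1, fun h => h2 ((hmemsome u x).mpr h)⟩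
          · rintro (⟨h1, h2⟩ | ⟨h1, h2⟩)
            · exact Or.inl ⟨(hmemsome u x).mpr h1, fun h => h2 ((hmemsome u y).mp h)⟩
            · exact Or.inr ⟨(hmemsome u y).mpr h1, fun h => h2 ((hmemsome u x).mp h)⟩
        rw [htrans, hdxy]
        simp
  -- univ is an OLD set of D
  have hUOLD : IsOLD D (Set.univ : Set (Option V)) := by
    constructor
    · rintro (_ | v)
      · exact ⟨none, trivial, (hnotnone none).mpr rfl⟩
      · obtain ⟨u, _, hu⟩ := hS0.1 v
        exact ⟨some u, trivial, (hmemsome u v).mpr hu⟩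
    · rintro (_ | x) (_ | y) hxy
      · exact absurd rfl hxy
      · -- none vs some y
        by_cases hyb : y = b
        · rw [hyb]
          refine ⟨some c, trivial, Set.mem_symmDiff.mpr (Or.inr ⟨(hmemsome c b).mpr hDcb, ?_⟩)⟩
          rw [hNnone]
          simp
        · refine ⟨none, trivial, Set.mem_symmDiff.mpr (Or.inl ⟨?_, ?_⟩)⟩
          · rw [hNnone]; rfl
          · show ¬ D none (some y)
            rw [hmemnone]; exact hyb
      · -- some x vs none
        by_cases hxb : x = b
        · rw [hxb]
          refine ⟨some c, trivial, Set.mem_symmDiff.mpr (Or.inl ⟨(hmemsome c b).mpr hDcb, ?_⟩)⟩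
          rw [hNnone]
          simp
        · refine ⟨none, trivial, Set.mem_symmDiff.mpr (Or.inr ⟨?_, ?_⟩)⟩
          · rw [hNnone]; rfl
          · show ¬ D none (some x)
            rw [hmemnone]; exact hxb
      · -- some x vs some y
        have hxy' : x ≠ y := fun h => hxy (by rw [h])
        obtain ⟨s, hs⟩ := hloc x y hxy'
        rw [Set.mem_symmDiff] at hs
        refine ⟨some s, trivial, Set.mem_symmDiff.mpr ?_⟩
        rcases hs with ⟨h1, h2⟩ | ⟨h1, h2⟩
        · exact Or.inl ⟨(hmemsome s x).mpr h1, fun h => h2 ((hmemsome s y).mp h)⟩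
        · exact Or.inr ⟨(hmemsome s y).mpr h1, fun h => h2 ((hmemsome s x).mp h)⟩
  -- conclusion about oldNum D
  have hall : ∀ S : Set (Option V), IsOLD D S → S = Set.univ := fun S hS =>
    Set.eq_univ_of_forall fun x => mem_of_isOLD hS (forcedD x)
  have hcardU : (Set.univ : Set (Option V)).ncard = Fintype.card (Option V) := by
    rw [Set.ncard_univ, Nat.card_eq_fintype_card]
  have h1 : oldNum D = Fintype.card (Option V) := by
    apply le_antisymm
    · exact Nat.sInf_le ⟨Set.univ, hUOLD, hcardU⟩
    · have hnes : {k | ∃ S : Set (Option V), IsOLD D S ∧ S.ncard = k}.Nonempty :=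
        ⟨Fintype.card (Option V), Set.univ, hUOLD, hcardU⟩
      apply le_csInf hnes
      rintro k ⟨S, hS, rfl⟩
      rw [hall S hS, hcardU]
  refine ⟨h1, ?_⟩
  -- tree part
  have hadjsome : ∀ u v : V, (underlying D).Adj (some u) (some v) ↔ (underlying D').Adj u v := by
    intro u v
    constructor
    · rintro ⟨hne', h | h⟩
      · exact ⟨fun h' => hne' (by rw [h']), Or.inl ((hmemsome u v).mp h)⟩
      · exact ⟨fun h' => hne' (by rw [h']), Or.inr ((hmemsome v u).mp h)⟩
    · rintro ⟨hne', h | h⟩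
      · exact ⟨by simpa using hne', Or.inl ((hmemsome u v).mpr h)⟩
      · exact ⟨by simpa using hne', Or.inr ((hmemsome v u).mpr h)⟩
  have hadjnone : ∀ x, (underlying D).Adj none x → x = some b := by
    rintro x ⟨hne', h | h⟩
    · cases x with
      | none => exact absurd rfl hne'
      | some v =>
        rw [hmemnone] at h
        rw [h]
    · rw [hnotnone] at h
      exact absurd h.symm hne'
  have hadjb : (underlying D).Adj none (some b) :=
    ⟨by simp, Or.inl ((hmemnone b).mpr rfl)⟩
  have hreach : ∀ x : Option V, (underlying D).Reachable x none := by
    rintro (_ | v)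
    · exact SimpleGraph.Reachable.refl _
    · have h1 : (underlying D').Reachable v b := htree.isConnected.preconnected v b
      have h2 : (underlying D).Reachable (some v) (some b) :=
        SimpleGraph.Reachable.map ⟨some, fun {u v} h => (hadjsome u v).mpr h⟩ h1
      exact h2.trans hadjb.reachable.symm
  have hconn : (underlying D).Connected := by
    rw [SimpleGraph.connected_iff]
    exact ⟨fun x y => (hreach x).trans (hreach y).symm, ⟨none⟩⟩
  exact ⟨hconn, acyclic_option htree.2 (fun u v h => (hadjsome u v).mp h) hadjnone⟩
end
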